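/- Let X be an abstract simplicial complex whose maximal simplices form a cover such that any two maximal simplices intersect in a (possibly empty) common face, i.e., all finite intersections of maximal simplices are empty or simplices. Then the geometric realization of X is homotopy equivalent to the geometric realization of the nerve N(X) of the collection of maximal simplices of X. -/

import Mathlib

/-- An abstract simplicial complex on vertex type `V`. -/
def IsComplex {V : Type*} (X : Set (Finset V)) : Prop :=
  (∀ s ∈ X, s.Nonempty) ∧ ∀ s ∈ X, ∀ t : Finset V, t ⊆ s → t.Nonempty → t ∈ X

/-- A maximal simplex of `X`. -/
def IsMaxSimplex {V : Type*} (X : Set (Finset V)) (K : Finset V) : Prop :=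
  K ∈ X ∧ ∀ L ∈ X, K ⊆ L → K = L

/-- The geometric realization of an abstract simplicial complex: the set of convex
coefficient functions supported on a simplex, topologised as a subspace of `V → ℝ`. -/
def realization {V : Type*} (X : Set (Finset V)) : Set (V → ℝ) :=
  {f | (∀ v, 0 ≤ f v) ∧ ∃ s ∈ X, (∀ v, f v ≠ 0 → v ∈ s) ∧ ∑ v ∈ s, f v = 1}

/-- The nerve `N(X)` of the collection of maximal simplices of `X`: an abstract simplicial
complex whose vertices are the maximal simplices of `X`, a finite family being a simplex
iff it has nonempty common intersection. -/
def nerveComplex {V : Type*} (X : Set (Finset V)) :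
    Set (Finset {K : Finset V // IsMaxSimplex X K}) :=
  {σ | σ.Nonempty ∧ ∃ x : V, ∀ K ∈ σ, x ∈ K.1}

namespace Stmt19

attribute [local instance] Classical.propDecidable

noncomputable section

variable {W W' : Type*}

/-- finite support of a coefficient function -/
def fsupp (x : W → ℝ) : Finset W :=
  if h : (Function.support x).Finite then h.toFinset else ∅

/-- the barycentric subdivision of a simplicial complex, as a complex on the
vertex set of all `Finset`s. -/
def sdC (A : Set (Finset W)) : Set (Finset (Finset W)) :=
  {S | S.Nonempty ∧ (∀ t ∈ S, t ∈ A) ∧ ∀ t ∈ S, ∀ t' ∈ S, t ⊆ t' ∨ t' ⊆ t}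

lemma isComplex_sdC (A : Set (Finset W)) (hA : IsComplex A) : IsComplex (sdC A) := by
  constructor
  · intro S hS; exact hS.1
  · intro S hS T hTS hTne
    exact ⟨hTne, fun t ht => hS.2.1 t (hTS ht), fun t ht t' ht' => hS.2.2 t (hTS ht) t' (hTS ht')⟩

section Basic

variable {A : Set (Finset W)} {x : W → ℝ}

lemma support_finite (hx : x ∈ realization A) : (Function.support x).Finite := by
  obtain ⟨-, s, -, hsupp, -⟩ := hx
  exact Set.Finite.subset s.finite_toSet (fun v hv => by
    simp only [Finset.coe_sort_coe, Finset.mem_coe]; exact hsupp v hv)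

lemma mem_fsupp (hx : x ∈ realization A) {v : W} : v ∈ fsupp x ↔ x v ≠ 0 := by
  rw [fsupp, dif_pos (support_finite hx)]
  simp [Function.mem_support]

lemma fsupp_subset_witness (hx : x ∈ realization A) {s : Finset W}
    (hsupp : ∀ v, x v ≠ 0 → v ∈ s) : fsupp x ⊆ s := by
  intro v hv; exact hsupp v ((mem_fsupp hx).1 hv)

lemma sum_fsupp_of_superset (hx : x ∈ realization A) {E : Finset W}
    (hE : fsupp x ⊆ E) : ∑ v ∈ E, x v = 1 := by
  obtain ⟨hpos, s, hsA, hsupp, hsum⟩ := hx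
  have h1 : ∑ v ∈ fsupp x, x v = ∑ v ∈ s, x v := by
    apply Finset.sum_subset (fsupp_subset_witness ⟨hpos, s, hsA, hsupp, hsum⟩ hsupp)
    intro v _ hv
    by_contra h
    exact hv ((mem_fsupp ⟨hpos, s, hsA, hsupp, hsum⟩).2 h)
  have h2 : ∑ v ∈ fsupp x, x v = ∑ v ∈ E, x v := by
    apply Finset.sum_subset hE
    intro v _ hv
    by_contra h
    exact hv ((mem_fsupp ⟨hpos, s, hsA, hsupp, hsum⟩).2 h)
  rw [← h2, h1, hsum]

lemma sum_fsupp (hx : x ∈ realization A) : ∑ v ∈ fsupp x, x v = 1 :=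
  sum_fsupp_of_superset hx (Finset.Subset.refl _)

lemma fsupp_nonempty (hx : x ∈ realization A) : (fsupp x).Nonempty := by
  by_contra h
  rw [Finset.not_nonempty_iff_eq_empty] at h
  have := sum_fsupp hx
  rw [h] at this; simp at this

lemma fsupp_mem (hA : IsComplex A) (hx : x ∈ realization A) : fsupp x ∈ A := by
  obtain ⟨hpos, s, hsA, hsupp, hsum⟩ := hx
  exact hA.2 s hsA _ (fsupp_subset_witness ⟨hpos, s, hsA, hsupp, hsum⟩ hsupp)
    (fsupp_nonempty ⟨hpos, s, hsA, hsupp, hsum⟩)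

lemma mass_le (hx : x ∈ realization A) (E : Finset W) : ∑ v ∈ E, x v ≤ 1 := by
  have h := sum_fsupp_of_superset hx (Finset.subset_union_right (s₁ := E))
  calc ∑ v ∈ E, x v ≤ ∑ v ∈ E ∪ fsupp x, x v := by
        apply Finset.sum_le_sum_of_subset_of_nonneg Finset.subset_union_left
        intro v _ _; exact hx.1 v
    _ = 1 := h

lemma mem_realization_of (h0 : ∀ v, 0 ≤ x v) {s : Finset W} (hs : s ∈ A)
    (hsupp : ∀ v, x v ≠ 0 → v ∈ s) (hsum : ∑ v ∈ s, x v = 1) : x ∈ realization A :=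
  ⟨h0, s, hs, hsupp, hsum⟩

end Basic

section Chain

variable {γ : Type*}

lemma chain_exists_max (T : Finset (Finset γ))
    (hch : ∀ a ∈ T, ∀ b ∈ T, a ⊆ b ∨ b ⊆ a) (hT : T.Nonempty) :
    ∃ m ∈ T, ∀ t ∈ T, t ⊆ m := by
  induction T using Finset.induction with
  | empty => exact absurd hT (by simp)
  | @insert a T hniT ih =>
    by_cases hT' : T.Nonempty
    · obtain ⟨m, hm, hmax⟩ := ih (fun x hx y hy => hch x (Finset.mem_insert_of_mem hx) y
        (Finset.mem_insert_of_mem hy)) hT'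
      rcases hch a (Finset.mem_insert_self a T) m (Finset.mem_insert_of_mem hm) with h | h
      · exact ⟨m, Finset.mem_insert_of_mem hm, fun t ht => by
          rcases Finset.mem_insert.1 ht with rfl | ht
          · exact h
          · exact hmax t ht⟩
      · exact ⟨a, Finset.mem_insert_self a T, fun t ht => by
          rcases Finset.mem_insert.1 ht with rfl | ht
          · exact Finset.Subset.refl _
          · exact (hmax t ht).trans h⟩
    · rw [Finset.not_nonempty_iff_eq_empty] at hT'
      subst hT'
      exact ⟨a, Finset.mem_insert_self a ∅, fun t ht => by
        rcases Finset.mem_insert.1 ht with rfl | ht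
        · exact Finset.Subset.refl _
        · simp at ht⟩

lemma chain_exists_min (T : Finset (Finset γ))
    (hch : ∀ a ∈ T, ∀ b ∈ T, a ⊆ b ∨ b ⊆ a) (hT : T.Nonempty) :
    ∃ m ∈ T, ∀ t ∈ T, m ⊆ t := by
  induction T using Finset.induction with
  | empty => exact absurd hT (by simp)
  | @insert a T hniT ih =>
    by_cases hT' : T.Nonempty
    · obtain ⟨m, hm, hmin⟩ := ih (fun x hx y hy => hch x (Finset.mem_insert_of_mem hx) y
        (Finset.mem_insert_of_mem hy)) hT'
      rcases hch a (Finset.mem_insert_self a T) m (Finset.mem_insert_of_mem hm) with h | h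
      · exact ⟨a, Finset.mem_insert_self a T, fun t ht => by
          rcases Finset.mem_insert.1 ht with rfl | ht
          · exact Finset.Subset.refl _
          · exact h.trans (hmin t ht)⟩
      · exact ⟨m, Finset.mem_insert_of_mem hm, fun t ht => by
          rcases Finset.mem_insert.1 ht with rfl | ht
          · exact h
          · exact hmin t ht⟩
    · rw [Finset.not_nonempty_iff_eq_empty] at hT'
      subst hT'
      exact ⟨a, Finset.mem_insert_self a ∅, fun t ht => by
        rcases Finset.mem_insert.1 ht with rfl | ht
        · exact Finset.Subset.refl _
        · simp at ht⟩

end Chain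


section Umap

open Finset

variable {A : Set (Finset W)} {x : W → ℝ}

/-- maximum of the coefficients outside `t` (`0` when there are none) -/
def Mout (x : W → ℝ) (t : Finset W) : ℝ :=
  (insert (0:ℝ) ((fsupp x \ t).image x)).max' (insert_nonempty _ _)

/-- barycentric coordinates: the weight of the simplex `t` in the
superlevel-set decomposition of `x`. -/
def umap (x : W → ℝ) : Finset W → ℝ := fun t =>
  if h : t.Nonempty then (t.card : ℝ) * max 0 (t.inf' h x - Mout x t) else 0

/-- the family of superlevel sets of `x`. -/
def levels (x : W → ℝ) : Finset (Finset W) :=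
  (fsupp x).image (fun v => (fsupp x).filter (fun w => x v ≤ x w))

lemma Mout_nonneg (x : W → ℝ) (t : Finset W) : 0 ≤ Mout x t :=
  le_max' _ _ (mem_insert_self _ _)

lemma le_Mout {t : Finset W} {w : W} (hw : w ∈ fsupp x) (hwt : w ∉ t) :
    x w ≤ Mout x t :=
  le_max' _ _ (mem_insert_of_mem (mem_image_of_mem x (mem_sdiff.2 ⟨hw, hwt⟩)))

lemma Mout_lt {t : Finset W} {c : ℝ} (h0 : 0 < c)
    (h : ∀ w ∈ fsupp x, w ∉ t → x w < c) : Mout x t < c := by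
  rw [Mout, Finset.max'_lt_iff]
  intro y hy
  rcases Finset.mem_insert.1 hy with rfl | hy
  · exact h0
  · obtain ⟨w, hw, rfl⟩ := Finset.mem_image.1 hy
    obtain ⟨hw1, hw2⟩ := mem_sdiff.1 hw
    exact h w hw1 hw2

lemma umap_nonneg (x : W → ℝ) (t : Finset W) : 0 ≤ umap x t := by
  rw [umap]
  split
  · positivity
  · exact le_refl 0

lemma pos_of_mem_fsupp (hx : x ∈ realization A) {v : W} (hv : v ∈ fsupp x) : 0 < x v :=
  lt_of_le_of_ne (hx.1 v) (Ne.symm ((mem_fsupp hx).1 hv))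

lemma level_inf (hx : x ∈ realization A) {v : W} (hv : v ∈ fsupp x) :
    ∀ hne : ((fsupp x).filter (fun w => x v ≤ x w)).Nonempty,
      ((fsupp x).filter (fun w => x v ≤ x w)).inf' hne x = x v := by
  intro hne
  apply le_antisymm (Finset.inf'_le x (mem_filter.2 ⟨hv, le_refl (x v)⟩))
  exact Finset.le_inf' hne x (fun w hw => (mem_filter.1 hw).2)

lemma level_Mout_lt (hx : x ∈ realization A) {v : W} (hv : v ∈ fsupp x) :
    Mout x ((fsupp x).filter (fun w => x v ≤ x w)) < x v := by
  apply Mout_lt (pos_of_mem_fsupp hx hv)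
  intro w hw hwt
  have : ¬ x v ≤ x w := fun hc => hwt (mem_filter.2 ⟨hw, hc⟩)
  linarith

lemma umap_pos_of_level (hx : x ∈ realization A) {v : W} (hv : v ∈ fsupp x) :
    0 < umap x ((fsupp x).filter (fun w => x v ≤ x w)) := by
  set t := (fsupp x).filter (fun w => x v ≤ x w) with ht
  have hne : t.Nonempty := ⟨v, mem_filter.2 ⟨hv, le_refl _⟩⟩
  rw [umap, dif_pos hne, level_inf hx hv hne]
  have h1 : (0:ℝ) < max 0 (x v - Mout x t) := by
    rw [lt_max_iff]; right; linarith [level_Mout_lt hx hv]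
  have hcard : (0:ℝ) < t.card := by exact_mod_cast Finset.card_pos.2 hne
  positivity

lemma umap_ne_zero_iff (hx : x ∈ realization A) {t : Finset W} :
    umap x t ≠ 0 ↔ t ∈ levels x := by
  constructor
  · intro h
    rw [umap] at h
    split at h
    · rename_i hne
      have hgap : 0 < t.inf' hne x - Mout x t := by
        by_contra hc
        push_neg at hc
        rw [max_eq_left (by linarith)] at h
        simp at h
      have hsub : t ⊆ fsupp x := by
        intro v hv
        have h1 : 0 < x v := lt_of_lt_of_le (lt_of_le_of_lt (Mout_nonneg x t) (by linarith))
          (Finset.inf'_le x hv)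
        exact (mem_fsupp hx).2 (by linarith)
      obtain ⟨v', hv', hv'eq⟩ := Finset.exists_mem_eq_inf' hne x
      have hveq : t = (fsupp x).filter (fun w => x v' ≤ x w) := by
        ext w
        rw [mem_filter]
        constructor
        · intro hw
          exact ⟨hsub hw, hv'eq ▸ Finset.inf'_le x hw⟩
        · rintro ⟨hw1, hw2⟩
          by_contra hwt
          have := le_Mout (x := x) hw1 hwt
          rw [hv'eq] at hgap
          linarith
      rw [levels, Finset.mem_image]
      exact ⟨v', hsub hv', hveq.symm⟩
    · exact absurd rfl h
  · intro ht
    obtain ⟨v, hv, rfl⟩ := Finset.mem_image.1 ht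
    exact ne_of_gt (umap_pos_of_level hx hv)

lemma levels_chain (hx : x ∈ realization A) :
    ∀ t ∈ levels x, ∀ t' ∈ levels x, t ⊆ t' ∨ t' ⊆ t := by
  intro t ht t' ht'
  obtain ⟨v, hv, rfl⟩ := Finset.mem_image.1 ht
  obtain ⟨v', hv', rfl⟩ := Finset.mem_image.1 ht'
  rcases le_total (x v) (x v') with h | h
  · right; intro w hw; rw [mem_filter] at hw ⊢; exact ⟨hw.1, h.trans hw.2⟩
  · left; intro w hw; rw [mem_filter] at hw ⊢; exact ⟨hw.1, h.trans hw.2⟩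

lemma levels_subset (hx : x ∈ realization A) {t : Finset W} (ht : t ∈ levels x) :
    t ⊆ fsupp x := by
  obtain ⟨v, hv, rfl⟩ := Finset.mem_image.1 ht
  exact filter_subset _ _

lemma levels_nonempty_elt (hx : x ∈ realization A) {t : Finset W} (ht : t ∈ levels x) :
    t.Nonempty := by
  obtain ⟨v, hv, rfl⟩ := Finset.mem_image.1 ht
  exact ⟨v, mem_filter.2 ⟨hv, le_refl _⟩⟩

lemma levels_nonempty (hx : x ∈ realization A) : (levels x).Nonempty := by
  obtain ⟨v, hv⟩ := fsupp_nonempty hx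
  exact ⟨_, Finset.mem_image_of_mem _ hv⟩

lemma levels_mem_sdC (hA : IsComplex A) (hx : x ∈ realization A) : levels x ∈ sdC A := by
  refine ⟨levels_nonempty hx, fun t ht => ?_, levels_chain hx⟩
  exact hA.2 _ (fsupp_mem hA hx) t (levels_subset hx ht) (levels_nonempty_elt hx ht)

end Umap

section Telescope

open Finset

lemma max'_eq_max' {s t : Finset ℝ} (h : s = t) {hs : s.Nonempty} {ht : t.Nonempty} :
    s.max' hs = t.max' ht := by subst h; rfl

lemma telescope_aux (n : ℕ) : ∀ (S : Finset ℝ), S.card = n → (∀ a ∈ S, 0 < a) →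
    ∑ a ∈ S, (a - (insert (0:ℝ) (S.filter (· < a))).max' (insert_nonempty _ _)) =
      (insert (0:ℝ) S).max' (insert_nonempty _ _) := by
  induction n with
  | zero =>
    intro S hS _
    rw [Finset.card_eq_zero] at hS
    subst hS
    simp
  | succ n ih =>
    intro S hS hpos
    have hSne : S.Nonempty := Finset.card_pos.1 (by omega)
    set m := S.max' hSne with hm
    have hmS : m ∈ S := S.max'_mem hSne
    set S' := S.erase m with hS'
    have hcard : S'.card = n := by
      rw [hS', Finset.card_erase_of_mem hmS, hS]
      omega
    have hS'sub : S' ⊆ S := Finset.erase_subset _ _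
    have hfiltm : S.filter (· < m) = S' := by
      ext a
      rw [Finset.mem_filter, hS', Finset.mem_erase]
      constructor
      · rintro ⟨ha, hlt⟩; exact ⟨ne_of_lt hlt, ha⟩
      · rintro ⟨hne, ha⟩; exact ⟨ha, lt_of_le_of_ne (Finset.le_max' S a ha) hne⟩
    have hfilt : ∀ a ∈ S', S.filter (· < a) = S'.filter (· < a) := by
      intro a ha
      ext b
      simp only [Finset.mem_filter]
      constructor
      · rintro ⟨hb, hlt⟩
        refine ⟨?_, hlt⟩
        rw [hS', Finset.mem_erase]
        refine ⟨?_, hb⟩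
        rintro rfl
        have : a ≤ m := Finset.le_max' S a (hS'sub ha)
        have : a ∈ S.erase m := ha
        rw [Finset.mem_erase] at this
        exact absurd (le_antisymm ‹a ≤ m› hlt.le) this.1
      · rintro ⟨hb, hlt⟩; exact ⟨hS'sub hb, hlt⟩
    have h1 : ∀ a ∈ S', (a - (insert (0:ℝ) (S.filter (· < a))).max' (insert_nonempty _ _))
        = (a - (insert (0:ℝ) (S'.filter (· < a))).max' (insert_nonempty _ _)) := by
      intro a ha
      have : S.filter (· < a) = S'.filter (· < a) := hfilt a ha
      congr 1
      apply max'_eq_max'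
      rw [this]
    rw [← Finset.add_sum_erase S _ hmS, ← hS', Finset.sum_congr rfl h1,
      ih S' hcard (fun a ha => hpos a (hS'sub ha))]
    have h2 : (insert (0:ℝ) (S.filter (· < m))).max' (insert_nonempty _ _)
        = (insert (0:ℝ) S').max' (insert_nonempty _ _) := by
      apply max'_eq_max'
      rw [hfiltm]
    rw [h2]
    have hmax : (insert (0:ℝ) S).max' (insert_nonempty _ _) = m := by
      apply le_antisymm
      · apply Finset.max'_le
        intro y hy
        rcases Finset.mem_insert.1 hy with rfl | hy
        · exact (hpos m hmS).le
        · exact Finset.le_max' S y hy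
      · exact Finset.le_max' _ _ (mem_insert_of_mem hmS)
    rw [hmax]
    ring

lemma telescope (S : Finset ℝ) (hpos : ∀ a ∈ S, 0 < a) :
    ∑ a ∈ S, (a - (insert (0:ℝ) (S.filter (· < a))).max' (insert_nonempty _ _)) =
      (insert (0:ℝ) S).max' (insert_nonempty _ _) :=
  telescope_aux S.card S rfl hpos

end Telescope

section Core

open Finset

variable {A : Set (Finset W)} {x : W → ℝ}

/-- key telescoping identity: the total weight (normalized by cardinality)
of superlevel sets containing `v` equals `x v`. -/
lemma core_telescope (hx : x ∈ realization A) {v : W} (hv : v ∈ fsupp x) :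
    ∑ t ∈ (levels x).filter (fun t => v ∈ t), umap x t / t.card = x v := by
  classical
  set S : Finset ℝ := ((fsupp x).image x).filter (· ≤ x v) with hS
  have hSpos : ∀ a ∈ S, 0 < a := by
    intro a ha
    obtain ⟨w, hw, rfl⟩ := Finset.mem_image.1 (Finset.mem_filter.1 ha).1
    exact pos_of_mem_fsupp hx hw
  -- the level map
  set L : ℝ → Finset W := fun a => (fsupp x).filter (fun w => a ≤ x w) with hL
  have hLmem : ∀ a ∈ S, L a ∈ (levels x).filter (fun t => v ∈ t) := by
    intro a ha
    obtain ⟨haim, hale⟩ := Finset.mem_filter.1 ha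
    obtain ⟨w, hw, rfl⟩ := Finset.mem_image.1 haim
    rw [Finset.mem_filter]
    constructor
    · exact Finset.mem_image_of_mem _ hw
    · exact Finset.mem_filter.2 ⟨hv, hale⟩
  have hLinf : ∀ a ∈ S, ∀ hne : (L a).Nonempty, (L a).inf' hne x = a := by
    intro a ha hne
    obtain ⟨haim, hale⟩ := Finset.mem_filter.1 ha
    obtain ⟨w, hw, rfl⟩ := Finset.mem_image.1 haim
    exact level_inf hx hw hne
  have hLinj : ∀ a ∈ S, ∀ b ∈ S, L a = L b → a = b := by
    intro a ha b hb heq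
    obtain ⟨w, hw, rfl⟩ := Finset.mem_image.1 (Finset.mem_filter.1 ha).1
    obtain ⟨w', hw', rfl⟩ := Finset.mem_image.1 (Finset.mem_filter.1 hb).1
    have h1 : w ∈ L (x w) := Finset.mem_filter.2 ⟨hw, le_refl _⟩
    have h2 : w' ∈ L (x w') := Finset.mem_filter.2 ⟨hw', le_refl _⟩
    rw [heq] at h1
    rw [← heq] at h2
    exact le_antisymm (Finset.mem_filter.1 h2).2 (Finset.mem_filter.1 h1).2
  have himg : (levels x).filter (fun t => v ∈ t) = S.image L := by
    ext t
    constructor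
    · intro ht
      obtain ⟨ht1, ht2⟩ := Finset.mem_filter.1 ht
      obtain ⟨w, hw, rfl⟩ := Finset.mem_image.1 ht1
      refine Finset.mem_image.2 ⟨x w, ?_, rfl⟩
      rw [hS, Finset.mem_filter]
      exact ⟨Finset.mem_image_of_mem _ hw, (Finset.mem_filter.1 ht2).2⟩
    · intro ht
      obtain ⟨a, ha, rfl⟩ := Finset.mem_image.1 ht
      exact hLmem a ha
  rw [himg, Finset.sum_image (fun a ha b hb => hLinj a ha b hb)]
  -- rewrite each summand
  have hsummand : ∀ a ∈ S, umap x (L a) / (L a).card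
      = a - (insert (0:ℝ) (S.filter (· < a))).max' (insert_nonempty _ _) := by
    intro a ha
    obtain ⟨haim, hale⟩ := Finset.mem_filter.1 ha
    obtain ⟨w, hw, hwa⟩ := Finset.mem_image.1 haim
    have hwLa : w ∈ L a := Finset.mem_filter.2 ⟨hw, hwa.ge⟩
    have hne : (L a).Nonempty := ⟨w, hwLa⟩
    have hMout : Mout x (L a) = (insert (0:ℝ) (S.filter (· < a))).max' (insert_nonempty _ _) := by
      have himg2 : (fsupp x \ L a).image x = S.filter (· < a) := by
        ext b
        constructor
        · intro hb
          obtain ⟨u, hu, rfl⟩ := Finset.mem_image.1 hb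
          obtain ⟨hu1, hu2⟩ := mem_sdiff.1 hu
          have hlt : x u < a := by
            by_contra hc
            push_neg at hc
            exact hu2 (Finset.mem_filter.2 ⟨hu1, hc⟩)
          rw [hS]
          refine Finset.mem_filter.2 ⟨Finset.mem_filter.2 ⟨Finset.mem_image_of_mem _ hu1, ?_⟩, hlt⟩
          linarith
        · intro hb
          obtain ⟨hb1, hb2⟩ := Finset.mem_filter.1 hb
          obtain ⟨hb3, -⟩ := Finset.mem_filter.1 hb1
          obtain ⟨u, hu, rfl⟩ := Finset.mem_image.1 hb3
          refine Finset.mem_image.2 ⟨u, mem_sdiff.2 ⟨hu, ?_⟩, rfl⟩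
          intro hc
          exact absurd (Finset.mem_filter.1 hc).2 (not_le.2 hb2)
      rw [Mout]
      apply max'_eq_max'
      rw [himg2]
    have hMlt : Mout x (L a) < a := by
      subst hwa; exact level_Mout_lt hx hw
    rw [umap, dif_pos hne, hLinf a ha hne, max_eq_right (by linarith), ← hMout]
    have hcard : ((L a).card : ℝ) ≠ 0 := by
      have := Finset.card_ne_zero_of_mem hwLa
      exact_mod_cast this
    field_simp
  rw [Finset.sum_congr rfl hsummand, telescope S hSpos]
  -- max of S-values is x v
  apply le_antisymm
  · apply Finset.max'_le
    intro y hy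
    rcases Finset.mem_insert.1 hy with rfl | hy
    · exact (hx.1 v)
    · exact (Finset.mem_filter.1 hy).2
  · apply Finset.le_max'
    refine mem_insert_of_mem (Finset.mem_filter.2 ⟨Finset.mem_image_of_mem _ hv, le_refl _⟩)

lemma sum_umap (hx : x ∈ realization A) : ∑ t ∈ levels x, umap x t = 1 := by
  have h1 : ∀ t ∈ levels x, umap x t = ∑ v ∈ t, umap x t / t.card := by
    intro t ht
    have hne := levels_nonempty_elt hx ht
    have hcard : ((t.card : ℝ)) ≠ 0 := by
      have := Finset.card_ne_zero_of_mem hne.choose_spec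
      exact_mod_cast this
    rw [Finset.sum_const, nsmul_eq_mul]
    field_simp
  rw [Finset.sum_congr rfl h1]
  -- swap the order of summation
  have h2 : ∑ t ∈ levels x, ∑ v ∈ t, umap x t / t.card
      = ∑ t ∈ levels x, ∑ v ∈ fsupp x, if v ∈ t then umap x t / t.card else 0 := by
    apply Finset.sum_congr rfl
    intro t ht
    rw [Finset.sum_ite_mem, Finset.inter_eq_right.2 (levels_subset hx ht)]
  rw [h2, Finset.sum_comm]
  have h3 : ∀ v ∈ fsupp x, ∑ t ∈ levels x, (if v ∈ t then umap x t / t.card else 0)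
      = x v := by
    intro v hv
    rw [← Finset.sum_filter]
    exact core_telescope hx hv
  rw [Finset.sum_congr rfl h3]
  exact sum_fsupp hx

end Core

section UB

open Finset

variable {A : Set (Finset W)} {x : W → ℝ} {z : Finset W → ℝ}

lemma umap_mem (hA : IsComplex A) (hx : x ∈ realization A) :
    umap x ∈ realization (sdC A) := by
  refine ⟨umap_nonneg x, levels x, levels_mem_sdC hA hx, ?_, sum_umap hx⟩
  intro t ht
  exact (umap_ne_zero_iff hx).1 ht

/-- the barycenter (affine reconstruction) map -/
def bmap (z : Finset W → ℝ) : W → ℝ := fun v =>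
  ∑ t ∈ (fsupp z).filter (fun t => v ∈ t), z t / t.card

lemma bmap_nonneg (hz : z ∈ realization (sdC A)) (v : W) : 0 ≤ bmap z v := by
  apply Finset.sum_nonneg
  intro t ht
  have h1 := hz.1 t
  positivity

lemma fsupp_mem_sdC (hz : z ∈ realization (sdC A)) : fsupp z ∈ sdC A := by
  obtain ⟨hpos, S, hS, hsupp, hsum⟩ := hz
  have hsub : fsupp z ⊆ S := fsupp_subset_witness ⟨hpos, S, hS, hsupp, hsum⟩ hsupp
  refine ⟨fsupp_nonempty ⟨hpos, S, hS, hsupp, hsum⟩, fun t ht => hS.2.1 t (hsub ht),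
    fun t ht t' ht' => hS.2.2 t (hsub ht) t' (hsub ht')⟩

lemma bmap_mem (hA : IsComplex A) (hz : z ∈ realization (sdC A)) :
    bmap z ∈ realization A := by
  obtain ⟨T_ne, T_mem, T_chain⟩ := fsupp_mem_sdC hz
  obtain ⟨m, hmT, hmax⟩ := chain_exists_max (fsupp z) T_chain T_ne
  refine ⟨bmap_nonneg hz, m, T_mem m hmT, ?_, ?_⟩
  · intro v hv
    simp only [bmap] at hv
    obtain ⟨t, ht, hne⟩ := Finset.exists_ne_zero_of_sum_ne_zero hv
    exact hmax t (Finset.mem_filter.1 ht).1 (Finset.mem_filter.1 ht).2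
  · simp only [bmap]
    rw [Finset.sum_comm' (t' := fsupp z) (s' := fun t => t)]
    · apply Eq.trans (Finset.sum_congr rfl (fun t ht => ?_)) (sum_fsupp hz)
      rw [Finset.sum_const, nsmul_eq_mul]
      have hne : t.Nonempty := hA.1 t (T_mem t ht)
      have hcard : ((t.card : ℝ)) ≠ 0 := by
        have := Finset.card_ne_zero_of_mem hne.choose_spec
        exact_mod_cast this
      field_simp
    · intro v t
      simp only [Finset.mem_filter]
      constructor
      · rintro ⟨hv, ht, hvt⟩
        exact ⟨hvt, ht⟩
      · rintro ⟨hvt, ht⟩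
        exact ⟨hmax t ht hvt, ht, hvt⟩

lemma bmap_umap (hA : IsComplex A) (hx : x ∈ realization A) : bmap (umap x) = x := by
  have hu := umap_mem hA hx
  funext v
  simp only [bmap]
  have hfs : fsupp (umap x) = levels x := by
    ext t
    rw [mem_fsupp hu]
    exact umap_ne_zero_iff hx
  rw [hfs]
  by_cases hv : v ∈ fsupp x
  · exact core_telescope hx hv
  · rw [Finset.sum_eq_zero, eq_comm]
    · by_contra h
      exact hv ((mem_fsupp hx).2 h)
    · intro t ht
      obtain ⟨ht1, ht2⟩ := Finset.mem_filter.1 ht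
      exact absurd (levels_subset hx ht1 ht2) hv

end UB

section UBinv

open Finset

variable {A : Set (Finset W)} {z : Finset W → ℝ}

/-- the set of support simplices containing `v` -/
def Memz (z : Finset W → ℝ) (v : W) : Finset (Finset W) :=
  (fsupp z).filter (fun t => v ∈ t)

lemma bmap_apply (z : Finset W → ℝ) (v : W) :
    bmap z v = ∑ t ∈ Memz z v, z t / t.card := rfl

lemma term_pos (hA : IsComplex A) (hz : z ∈ realization (sdC A)) {t : Finset W}
    (ht : t ∈ fsupp z) : 0 < z t / t.card := by
  have h1 : 0 < z t := pos_of_mem_fsupp hz ht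
  have hne : t.Nonempty := hA.1 t ((fsupp_mem_sdC hz).2.1 t ht)
  have h2 : (0:ℝ) < t.card := by exact_mod_cast Finset.card_pos.2 hne
  positivity

lemma bmap_ne_zero_iff (hA : IsComplex A) (hz : z ∈ realization (sdC A)) (v : W) :
    bmap z v ≠ 0 ↔ (Memz z v).Nonempty := by
  rw [bmap_apply]
  constructor
  · intro h
    by_contra hc
    rw [Finset.not_nonempty_iff_eq_empty] at hc
    rw [hc] at h
    simp at h
  · intro h
    have : 0 < ∑ t ∈ Memz z v, z t / t.card :=
      Finset.sum_pos (fun t ht => term_pos hA hz (Finset.mem_filter.1 ht).1) h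
    linarith

lemma Memz_comp (hz : z ∈ realization (sdC A)) (v w : W) :
    Memz z v ⊆ Memz z w ∨ Memz z w ⊆ Memz z v := by
  have hchain := (fsupp_mem_sdC hz).2.2
  by_cases h : Memz z v ⊆ Memz z w
  · exact Or.inl h
  · right
    rw [Finset.not_subset] at h
    obtain ⟨t, htv, htw⟩ := h
    obtain ⟨htT, hvt⟩ := Finset.mem_filter.1 htv
    intro t' ht'
    obtain ⟨ht'T, hwt'⟩ := Finset.mem_filter.1 ht'
    have hwt : w ∉ t := fun hc => htw (Finset.mem_filter.2 ⟨htT, hc⟩)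
    rcases hchain t' ht'T t htT with hsub | hsub
    · exact absurd (hsub hwt') hwt
    · exact Finset.mem_filter.2 ⟨ht'T, hsub hvt⟩

lemma bmap_mono (hz : z ∈ realization (sdC A)) {v w : W}
    (h : Memz z w ⊆ Memz z v) : bmap z w ≤ bmap z v := by
  rw [bmap_apply, bmap_apply]
  apply Finset.sum_le_sum_of_subset_of_nonneg h
  intro t ht _
  have h1 := hz.1 t
  positivity

lemma bmap_strict (hA : IsComplex A) (hz : z ∈ realization (sdC A)) {v w : W}
    (h : Memz z w ⊂ Memz z v) : bmap z w < bmap z v := by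
  rw [bmap_apply, bmap_apply]
  obtain ⟨t, htv, htw⟩ := Finset.exists_of_ssubset h
  apply Finset.sum_lt_sum_of_subset h.subset htv htw
    (term_pos hA hz (Finset.mem_filter.1 htv).1)
  intro j hj _
  have h1 := hz.1 j
  positivity

lemma Memz_mono_of_le (hA : IsComplex A) (hz : z ∈ realization (sdC A)) {v w : W}
    (h : bmap z v ≤ bmap z w) : Memz z v ⊆ Memz z w := by
  rcases Memz_comp hz v w with hc | hc
  · exact hc
  · by_cases he : Memz z w = Memz z v
    · rw [he]
    · have := bmap_strict hA hz (ssubset_of_subset_of_ne hc he)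
      linarith

/-- the superlevel decomposition inverts the barycenter reconstruction -/
lemma umap_bmap (hA : IsComplex A) (hz : z ∈ realization (sdC A)) :
    umap (bmap z) = z := by
  have hy : bmap z ∈ realization A := bmap_mem hA hz
  set y := bmap z with hydef
  obtain ⟨Tne, Tmem, Tchain⟩ := fsupp_mem_sdC hz
  funext t₀
  by_cases ht₀ : t₀ ∈ fsupp z
  · -- t₀ is a support simplex
    have hne₀ : t₀.Nonempty := hA.1 t₀ (Tmem t₀ ht₀)
    set Tsup := (fsupp z).filter (fun t => t₀ ⊆ t) with hTsup
    set Tssup := (fsupp z).filter (fun t => t₀ ⊂ t) with hTssup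
    set R := ∑ t ∈ Tsup, z t / t.card with hR
    set Q := ∑ t ∈ Tssup, z t / t.card with hQ
    -- a vertex of t₀ in no smaller support simplex
    have hv₀ : ∃ v₀ ∈ t₀, Memz z v₀ = Tsup := by
      set Tlt := (fsupp z).filter (fun t => t ⊂ t₀) with hTlt
      by_cases hlt : Tlt.Nonempty
      · obtain ⟨tm, htm, htmax⟩ := chain_exists_max Tlt
          (fun a ha b hb => Tchain a (Finset.mem_filter.1 ha).1 b (Finset.mem_filter.1 hb).1) hlt
        obtain ⟨htmT, htmlt⟩ := Finset.mem_filter.1 htm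
        obtain ⟨v₀, hv₀t, hv₀m⟩ := Finset.exists_of_ssubset htmlt
        refine ⟨v₀, hv₀t, ?_⟩
        ext t
        simp only [Memz, Finset.mem_filter, hTsup]
        constructor
        · rintro ⟨htT, hvt⟩
          refine ⟨htT, ?_⟩
          rcases Tchain t htT t₀ ht₀ with hsub | hsub
          · rcases eq_or_ne t t₀ with rfl | hne
            · exact Finset.Subset.refl _
            · have : t ∈ Tlt := Finset.mem_filter.2 ⟨htT, ssubset_of_subset_of_ne hsub hne⟩
              exact absurd (htmax t this hvt) hv₀m
          · exact hsub
        · rintro ⟨htT, hsub⟩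
          exact ⟨htT, hsub hv₀t⟩
      · rw [Finset.not_nonempty_iff_eq_empty] at hlt
        obtain ⟨v₀, hv₀t⟩ := hne₀
        refine ⟨v₀, hv₀t, ?_⟩
        ext t
        simp only [Memz, Finset.mem_filter, hTsup]
        constructor
        · rintro ⟨htT, hvt⟩
          refine ⟨htT, ?_⟩
          rcases Tchain t htT t₀ ht₀ with hsub | hsub
          · rcases eq_or_ne t t₀ with rfl | hne
            · exact Finset.Subset.refl _
            · have : t ∈ Tlt := Finset.mem_filter.2 ⟨htT, ssubset_of_subset_of_ne hsub hne⟩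
              rw [hlt] at this
              simp at this
          · exact hsub
        · rintro ⟨htT, hsub⟩
          exact ⟨htT, hsub hv₀t⟩
    obtain ⟨v₀, hv₀t, hv₀m⟩ := hv₀
    have hyv₀ : y v₀ = R := by rw [hydef, bmap_apply, hv₀m]
    -- the minimum of y on t₀ is R
    have hinf : t₀.inf' hne₀ y = R := by
      apply le_antisymm
      · rw [← hyv₀]; exact Finset.inf'_le y hv₀t
      · apply Finset.le_inf' hne₀
        intro v hvt
        rw [hydef, bmap_apply]
        apply Finset.sum_le_sum_of_subset_of_nonneg
        · intro t ht
          obtain ⟨htT, hsub⟩ := Finset.mem_filter.1 ht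
          exact Finset.mem_filter.2 ⟨htT, hsub hvt⟩
        · intro t _ _
          have h1 := hz.1 t
          positivity
    -- the outside maximum is Q
    have hQnn : 0 ≤ Q := by
      apply Finset.sum_nonneg
      intro t _
      have h1 := hz.1 t
      positivity
    have hMout : Mout y t₀ = Q := by
      apply le_antisymm
      · apply Finset.max'_le
        intro b hb
        rcases Finset.mem_insert.1 hb with rfl | hb
        · exact hQnn
        · obtain ⟨w, hw, rfl⟩ := Finset.mem_image.1 hb
          obtain ⟨hwsupp, hwt₀⟩ := mem_sdiff.1 hw
          rw [hydef, bmap_apply]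
          apply Finset.sum_le_sum_of_subset_of_nonneg
          · intro t ht
            obtain ⟨htT, hwt⟩ := Finset.mem_filter.1 ht
            refine Finset.mem_filter.2 ⟨htT, ?_⟩
            rcases Tchain t htT t₀ ht₀ with hsub | hsub
            · exact absurd (hsub hwt) hwt₀
            · exact ssubset_of_subset_of_ne hsub (fun hc => hwt₀ (hc ▸ hwt))
          · intro t _ _
            have h1 := hz.1 t
            positivity
      · by_cases hss : Tssup.Nonempty
        · obtain ⟨tp, htp, htpmin⟩ := chain_exists_min Tssup
            (fun a ha b hb => Tchain a (Finset.mem_filter.1 ha).1 b (Finset.mem_filter.1 hb).1) hss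
          obtain ⟨htpT, htpss⟩ := Finset.mem_filter.1 htp
          obtain ⟨w, hwtp, hwt₀⟩ := Finset.exists_of_ssubset htpss
          have hMw : Memz z w = Tssup := by
            ext t
            simp only [Memz, Finset.mem_filter, hTssup]
            constructor
            · rintro ⟨htT, hwt⟩
              refine ⟨htT, ?_⟩
              rcases Tchain t htT t₀ ht₀ with hsub | hsub
              · exact absurd (hsub hwt) hwt₀
              · exact ssubset_of_subset_of_ne hsub (fun hc => hwt₀ (hc ▸ hwt))
            · rintro ⟨htT, hss⟩
              exact ⟨htT, htpmin t (Finset.mem_filter.2 ⟨htT, hss⟩) hwtp⟩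
          have hyw : y w = Q := by rw [hydef, bmap_apply, hMw]
          have hywpos : 0 < y w := by
            rw [hyw, hQ]
            exact Finset.sum_pos (fun t ht => term_pos hA hz (Finset.mem_filter.1 ht).1) hss
          have hwfs : w ∈ fsupp y := (mem_fsupp hy).2 (ne_of_gt hywpos)
          rw [← hyw]
          exact le_Mout hwfs hwt₀
        · rw [Finset.not_nonempty_iff_eq_empty] at hss
          rw [hQ, hss]
          simpa using Mout_nonneg y t₀
    -- assemble
    have hsplit : Tsup = insert t₀ Tssup := by
      ext t
      simp only [hTsup, hTssup, Finset.mem_filter, Finset.mem_insert]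
      constructor
      · rintro ⟨htT, hsub⟩
        rcases eq_or_ne t t₀ with rfl | hne
        · exact Or.inl rfl
        · exact Or.inr ⟨htT, ssubset_of_subset_of_ne hsub (Ne.symm hne)⟩
      · rintro (rfl | ⟨htT, hss⟩)
        · exact ⟨ht₀, Finset.Subset.refl _⟩
        · exact ⟨htT, hss.subset⟩
    have ht₀nss : t₀ ∉ Tssup := by
      simp only [hTssup, Finset.mem_filter]
      rintro ⟨-, hc⟩
      exact (lt_irrefl _ hc)
    have hRQ : R - Q = z t₀ / t₀.card := by
      rw [hR, hsplit, Finset.sum_insert ht₀nss, hQ]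
      ring
    have hcard : ((t₀.card : ℝ)) ≠ 0 := by
      have := Finset.card_ne_zero_of_mem hne₀.choose_spec
      exact_mod_cast this
    have hz₀ : 0 ≤ z t₀ := hz.1 t₀
    rw [umap, dif_pos hne₀, hinf, hMout, hRQ, max_eq_right (by positivity)]
    field_simp
  · -- t₀ is not a support simplex
    have hz₀ : z t₀ = 0 := by
      by_contra h
      exact ht₀ ((mem_fsupp hz).2 h)
    rw [hz₀]
    by_contra h
    have ht₀lv : t₀ ∈ levels y := (umap_ne_zero_iff hy).1 h
    obtain ⟨v', hv', ht₀eq⟩ := Finset.mem_image.1 ht₀lv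
    have hMv'ne : (Memz z v').Nonempty := by
      rw [← bmap_ne_zero_iff hA hz]
      exact (mem_fsupp hy).1 hv'
    obtain ⟨ts, hts, htsmin⟩ := chain_exists_min (Memz z v')
      (fun a ha b hb => Tchain a (Finset.mem_filter.1 ha).1 b (Finset.mem_filter.1 hb).1) hMv'ne
    have ht₀ts : t₀ = ts := by
      rw [← ht₀eq]
      ext w
      simp only [Finset.mem_filter]
      constructor
      · rintro ⟨hwfs, hwy⟩
        have hsub : Memz z v' ⊆ Memz z w := Memz_mono_of_le hA hz hwy
        exact (Finset.mem_filter.1 (hsub hts)).2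
      · intro hwts
        have hsub : Memz z v' ⊆ Memz z w := by
          intro t ht
          refine Finset.mem_filter.2 ⟨(Finset.mem_filter.1 ht).1, htsmin t ht hwts⟩
        have hwy : y v' ≤ y w := bmap_mono hz hsub
        have hwpos : (Memz z w).Nonempty := ⟨ts, Finset.mem_filter.2
          ⟨(Finset.mem_filter.1 hts).1, hwts⟩⟩
        have hwfs : w ∈ fsupp y := (mem_fsupp hy).2 ((bmap_ne_zero_iff hA hz w).2 hwpos)
        exact ⟨hwfs, hwy⟩
    exact ht₀ (ht₀ts ▸ (Finset.mem_filter.1 hts).1)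

end UBinv

section Push

open Finset

variable {A : Set (Finset W)} {A' : Set (Finset W')} {x : W → ℝ}

/-- pushforward of coefficients along a vertex map -/
def push (φ : W → W') (x : W → ℝ) : W' → ℝ := fun w' =>
  ∑ v ∈ (fsupp x).filter (fun v => φ v = w'), x v

lemma push_nonneg (hx : x ∈ realization A) (φ : W → W') (w' : W') : 0 ≤ push φ x w' :=
  Finset.sum_nonneg (fun v _ => hx.1 v)

lemma push_mem (hA : IsComplex A) {φ : W → W'}
    (himg : ∀ s ∈ A, ∃ s' ∈ A', ∀ a ∈ s, φ a ∈ s')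
    (hx : x ∈ realization A) : push φ x ∈ realization A' := by
  obtain ⟨s', hs', hmaps⟩ := himg _ (fsupp_mem hA hx)
  refine ⟨push_nonneg hx φ, s', hs', ?_, ?_⟩
  · intro w' hw'
    simp only [push] at hw'
    obtain ⟨v, hv, -⟩ := Finset.exists_ne_zero_of_sum_ne_zero hw'
    obtain ⟨hvf, rfl⟩ := Finset.mem_filter.1 hv
    exact hmaps v hvf
  · simp only [push]
    rw [Finset.sum_fiberwise_of_maps_to (fun v hv => hmaps v hv)]
    exact sum_fsupp hx

lemma push_ne_exists {φ : W → W'} {w' : W'} (h : push φ x w' ≠ 0) :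
    ∃ v ∈ fsupp x, φ v = w' := by
  simp only [push] at h
  obtain ⟨v, hv, -⟩ := Finset.exists_ne_zero_of_sum_ne_zero h
  obtain ⟨hvf, rfl⟩ := Finset.mem_filter.1 hv
  exact ⟨v, hvf, rfl⟩

lemma bmap_supp_subset (hA : IsComplex A) {z : Finset W → ℝ}
    (hz : z ∈ realization (sdC A)) {v : W} (hv : v ∈ fsupp (bmap z)) :
    ∃ t ∈ fsupp z, v ∈ t := by
  have h := (mem_fsupp (bmap_mem hA hz)).1 hv
  simp only [bmap] at h
  obtain ⟨t, ht, -⟩ := Finset.exists_ne_zero_of_sum_ne_zero h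
  obtain ⟨htT, hvt⟩ := Finset.mem_filter.1 ht
  exact ⟨t, htT, hvt⟩

lemma umap_supp (hA : IsComplex A) (hx : x ∈ realization A) :
    fsupp (umap x) = levels x := by
  ext t
  rw [mem_fsupp (umap_mem hA hx)]
  exact umap_ne_zero_iff hx

end Push

section Cont

open Finset Metric

variable {A : Set (Finset W)} {A' : Set (Finset W')}

lemma nbhd_basic (x₀ : ↥(realization A)) {δ : ℝ} (hδ : 0 < δ) :
    ∀ᶠ x : ↥(realization A) in nhds x₀,
      ∀ v ∈ fsupp (x₀ : W → ℝ), |(x : W → ℝ) v - (x₀ : W → ℝ) v| < δ := by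
  set s₀ := fsupp (x₀ : W → ℝ)
  have hopen : IsOpen (Set.pi (↑s₀ : Set W) (fun v => Metric.ball ((x₀ : W → ℝ) v) δ)) :=
    isOpen_set_pi (s₀.finite_toSet) (fun _ _ => Metric.isOpen_ball)
  have hmem : x₀ ∈ (Subtype.val) ⁻¹' (Set.pi (↑s₀ : Set W)
      (fun v => Metric.ball ((x₀ : W → ℝ) v) δ)) := by
    intro v _
    simpa using hδ
  filter_upwards [(hopen.preimage continuous_subtype_val).mem_nhds hmem] with x hx v hv
  have := hx v (Finset.mem_coe.2 hv)
  rw [Metric.mem_ball, Real.dist_eq] at this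
  exact this

lemma sum_abs_le {x x₀ : W → ℝ} {δ : ℝ} (E : Finset W)
    (h : ∀ v ∈ E, |x v - x₀ v| < δ) : ∑ v ∈ E, |x v - x₀ v| ≤ E.card * δ := by
  calc ∑ v ∈ E, |x v - x₀ v| ≤ ∑ _v ∈ E, δ := Finset.sum_le_sum (fun v hv => (h v hv).le)
    _ = E.card * δ := by rw [Finset.sum_const, nsmul_eq_mul]

lemma tail_bound {x x₀ : W → ℝ} (hx : x ∈ realization A) (hx₀ : x₀ ∈ realization A)
    {δ : ℝ} (h : ∀ v ∈ fsupp x₀, |x v - x₀ v| < δ) :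
    1 - ∑ v ∈ fsupp x₀, x v ≤ (fsupp x₀).card * δ := by
  have h1 : (1:ℝ) - ∑ v ∈ fsupp x₀, x v = ∑ v ∈ fsupp x₀, (x₀ v - x v) := by
    rw [Finset.sum_sub_distrib, sum_fsupp hx₀]
  rw [h1]
  calc ∑ v ∈ fsupp x₀, (x₀ v - x v) ≤ ∑ v ∈ fsupp x₀, |x v - x₀ v| := by
        apply Finset.sum_le_sum
        intro v _
        rw [abs_sub_comm]
        exact le_abs_self _
    _ ≤ _ := sum_abs_le _ h

lemma offsupp_sum {x : W → ℝ} (hx : x ∈ realization A) (E : Finset W) :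
    ∑ v ∈ fsupp x \ E, x v = 1 - ∑ v ∈ E ∩ fsupp x, x v := by
  have hdisj : Disjoint (E ∩ fsupp x) (fsupp x \ E) := by
    apply Finset.disjoint_left.2
    intro v hv hv'
    exact (Finset.mem_sdiff.1 hv').2 (Finset.mem_inter.1 hv).1
  have hunion : (E ∩ fsupp x) ∪ (fsupp x \ E) = fsupp x := by
    ext v
    simp only [Finset.mem_union, Finset.mem_inter, Finset.mem_sdiff]
    constructor
    · rintro (⟨-, hv⟩ | ⟨hv, -⟩) <;> exact hv
    · intro hv
      by_cases hE : v ∈ E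
      · exact Or.inl ⟨hE, hv⟩
      · exact Or.inr ⟨hv, hE⟩
  have h2 : ∑ v ∈ (E ∩ fsupp x), x v + ∑ v ∈ (fsupp x \ E), x v = 1 := by
    rw [← Finset.sum_union hdisj, hunion]
    exact sum_fsupp hx
  linarith

lemma cont_kappa (A : Set (Finset W)) (κ : W → ℝ) (h0 : ∀ v, 0 ≤ κ v) (h1 : ∀ v, κ v ≤ 1) :
    Continuous (fun x : ↥(realization A) => ∑ v ∈ fsupp (x : W → ℝ), κ v * (x : W → ℝ) v) := by
  rw [continuous_iff_continuousAt]
  intro x₀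
  rw [ContinuousAt, Metric.tendsto_nhds]
  intro ε hε
  set s₀ := fsupp (x₀ : W → ℝ) with hs₀
  set n : ℝ := (s₀.card : ℝ) with hn
  have hn0 : 0 ≤ n := by positivity
  set δ := ε / (2 * n + 2) with hδdef
  have hδ : 0 < δ := by positivity
  filter_upwards [nbhd_basic x₀ hδ] with x hx
  set E := fsupp (x : W → ℝ) ∪ s₀ with hE
  have hxr := x.2
  have hx₀r := x₀.2
  have hsum1 : ∑ v ∈ fsupp (x : W → ℝ), κ v * (x : W → ℝ) v
      = ∑ v ∈ E, κ v * (x : W → ℝ) v := by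
    apply Finset.sum_subset Finset.subset_union_left
    intro v _ hv
    have : (x : W → ℝ) v = 0 := by
      by_contra hc
      exact hv ((mem_fsupp hxr).2 hc)
    rw [this, mul_zero]
  have hsum2 : ∑ v ∈ s₀, κ v * (x₀ : W → ℝ) v = ∑ v ∈ E, κ v * (x₀ : W → ℝ) v := by
    apply Finset.sum_subset Finset.subset_union_right
    intro v _ hv
    have : (x₀ : W → ℝ) v = 0 := by
      by_contra hc
      exact hv ((mem_fsupp hx₀r).2 hc)
    rw [this, mul_zero]
  rw [Real.dist_eq, hsum1, hsum2, ← Finset.sum_sub_distrib]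
  have hsplit : E = s₀ ∪ (E \ s₀) := by
    ext v; simp only [Finset.mem_union, Finset.mem_sdiff, hE]
    tauto
  have key : |∑ v ∈ E, (κ v * (x : W → ℝ) v - κ v * (x₀ : W → ℝ) v)|
      ≤ ∑ v ∈ E, |κ v * ((x : W → ℝ) v - (x₀ : W → ℝ) v)| := by
    rw [show (fun v => κ v * (x : W → ℝ) v - κ v * (x₀ : W → ℝ) v)
      = fun v => κ v * ((x : W → ℝ) v - (x₀ : W → ℝ) v) by funext v; ring]
    exact Finset.abs_sum_le_sum_abs _ _
  have hterm : ∀ v ∈ E, |κ v * ((x : W → ℝ) v - (x₀ : W → ℝ) v)|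
      ≤ if v ∈ s₀ then |(x : W → ℝ) v - (x₀ : W → ℝ) v| else (x : W → ℝ) v := by
    intro v hv
    rw [abs_mul, abs_of_nonneg (h0 v)]
    split
    · nlinarith [abs_nonneg ((x : W → ℝ) v - (x₀ : W → ℝ) v), h0 v, h1 v]
    · rename_i hvs
      have hx₀v : (x₀ : W → ℝ) v = 0 := by
        by_contra hc
        exact hvs ((mem_fsupp hx₀r).2 hc)
      rw [hx₀v, sub_zero, abs_of_nonneg (hxr.1 v)]
      nlinarith [hxr.1 v, h0 v, h1 v]
  have hsum3 : ∑ v ∈ E, (if v ∈ s₀ then |(x : W → ℝ) v - (x₀ : W → ℝ) v| else (x : W → ℝ) v)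
      ≤ n * δ + n * δ := by
    rw [Finset.sum_ite]
    have e1 : ∑ v ∈ E.filter (· ∈ s₀), |(x : W → ℝ) v - (x₀ : W → ℝ) v| ≤ n * δ := by
      have hsub : E.filter (· ∈ s₀) ⊆ s₀ := fun v hv => (Finset.mem_filter.1 hv).2
      calc ∑ v ∈ E.filter (· ∈ s₀), |(x : W → ℝ) v - (x₀ : W → ℝ) v|
          ≤ ∑ v ∈ s₀, |(x : W → ℝ) v - (x₀ : W → ℝ) v| :=
            Finset.sum_le_sum_of_subset_of_nonneg hsub (fun v _ _ => abs_nonneg _)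
        _ ≤ s₀.card * δ := sum_abs_le _ hx
    have e2 : ∑ v ∈ E.filter (· ∉ s₀), (x : W → ℝ) v ≤ n * δ := by
      have hsub : E.filter (· ∉ s₀) ⊆ fsupp (x : W → ℝ) \ s₀ ∪ (s₀ \ s₀) := by
        intro v hv
        obtain ⟨hvE, hvs⟩ := Finset.mem_filter.1 hv
        rcases Finset.mem_union.1 hvE with h | h
        · exact Finset.mem_union.2 (Or.inl (Finset.mem_sdiff.2 ⟨h, hvs⟩))
        · exact absurd h hvs
      rw [Finset.sdiff_self, Finset.union_empty] at hsub
      calc ∑ v ∈ E.filter (· ∉ s₀), (x : W → ℝ) v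
          ≤ ∑ v ∈ fsupp (x : W → ℝ) \ s₀, (x : W → ℝ) v :=
            Finset.sum_le_sum_of_subset_of_nonneg hsub (fun v _ _ => hxr.1 v)
        _ = 1 - ∑ v ∈ s₀ ∩ fsupp (x : W → ℝ), (x : W → ℝ) v := offsupp_sum hxr s₀
        _ = 1 - ∑ v ∈ s₀, (x : W → ℝ) v := by
            congr 1
            apply Finset.sum_subset Finset.inter_subset_left
            intro v hv hnv
            by_contra hc
            exact hnv (Finset.mem_inter.2 ⟨hv, (mem_fsupp hxr).2 hc⟩)
        _ ≤ s₀.card * δ := tail_bound hxr hx₀r hx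
    linarith
  calc |∑ v ∈ E, (κ v * (x : W → ℝ) v - κ v * (x₀ : W → ℝ) v)|
      ≤ ∑ v ∈ E, |κ v * ((x : W → ℝ) v - (x₀ : W → ℝ) v)| := key
    _ ≤ ∑ v ∈ E, (if v ∈ s₀ then |(x : W → ℝ) v - (x₀ : W → ℝ) v| else (x : W → ℝ) v) :=
        Finset.sum_le_sum hterm
    _ ≤ n * δ + n * δ := hsum3
    _ < ε := by
        have hδeq : δ * (2 * n + 2) = ε := by
          rw [hδdef]
          field_simp
        nlinarith [hδ, hn0]

end Cont

section Cont2

open Finset Metric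

variable {A : Set (Finset W)} {A' : Set (Finset W')}

lemma cont_Mout (A : Set (Finset W)) (t : Finset W) :
    Continuous (fun x : ↥(realization A) => Mout (x : W → ℝ) t) := by
  rw [continuous_iff_continuousAt]
  intro x₀
  rw [ContinuousAt, Metric.tendsto_nhds]
  intro ε hε
  set s₀ := fsupp (x₀ : W → ℝ) with hs₀
  set n : ℝ := (s₀.card : ℝ) with hn
  have hn0 : 0 ≤ n := by positivity
  set δ := ε / (n + 2) with hδdef
  have hδ : 0 < δ := by positivity
  have hδε : (n + 1) * δ < ε := by
    have hδeq : δ * (n + 2) = ε := by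
      rw [hδdef]; field_simp
    nlinarith [hδ, hn0]
  filter_upwards [nbhd_basic x₀ hδ] with x hx
  have hxr := x.2
  have hx₀r := x₀.2
  -- lower bound : Mout x₀ ≤ Mout x + δ
  have hlow : Mout (x₀ : W → ℝ) t ≤ Mout (x : W → ℝ) t + δ := by
    apply Finset.max'_le
    intro b hb
    rcases Finset.mem_insert.1 hb with rfl | hb
    · have := Mout_nonneg (x : W → ℝ) t
      linarith
    · obtain ⟨v, hv, rfl⟩ := Finset.mem_image.1 hb
      obtain ⟨hvs, hvt⟩ := mem_sdiff.1 hv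
      have h1 : |(x : W → ℝ) v - (x₀ : W → ℝ) v| < δ := hx v hvs
      have h2 : (x : W → ℝ) v ≤ Mout (x : W → ℝ) t := by
        by_cases hfx : v ∈ fsupp (x : W → ℝ)
        · exact le_Mout hfx hvt
        · have : (x : W → ℝ) v = 0 := by
            by_contra hc
            exact hfx ((mem_fsupp hxr).2 hc)
          rw [this]
          exact Mout_nonneg _ _
      have := abs_lt.1 h1
      linarith
  -- upper bound : Mout x ≤ Mout x₀ + (n+1) δ
  have hup : Mout (x : W → ℝ) t ≤ Mout (x₀ : W → ℝ) t + (n + 1) * δ := by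
    apply Finset.max'_le
    intro b hb
    rcases Finset.mem_insert.1 hb with rfl | hb
    · have := Mout_nonneg (x₀ : W → ℝ) t
      nlinarith
    · obtain ⟨v, hv, rfl⟩ := Finset.mem_image.1 hb
      obtain ⟨hvs, hvt⟩ := mem_sdiff.1 hv
      by_cases hvs₀ : v ∈ s₀
      · have h1 := abs_lt.1 (hx v hvs₀)
        have h2 : (x₀ : W → ℝ) v ≤ Mout (x₀ : W → ℝ) t := le_Mout hvs₀ hvt
        nlinarith
      · -- v outside s₀ : the coefficient is at most the missing mass
        have h1 : (x : W → ℝ) v ≤ ∑ w ∈ fsupp (x : W → ℝ) \ s₀, (x : W → ℝ) w := by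
          apply Finset.single_le_sum (fun w _ => hxr.1 w)
          exact mem_sdiff.2 ⟨hvs, hvs₀⟩
        have h2 : ∑ w ∈ fsupp (x : W → ℝ) \ s₀, (x : W → ℝ) w
            = 1 - ∑ w ∈ s₀ ∩ fsupp (x : W → ℝ), (x : W → ℝ) w := offsupp_sum hxr s₀
        have h3 : ∑ w ∈ s₀ ∩ fsupp (x : W → ℝ), (x : W → ℝ) w = ∑ w ∈ s₀, (x : W → ℝ) w := by
          apply Finset.sum_subset Finset.inter_subset_left
          intro w hw hnw
          by_contra hc
          exact hnw (Finset.mem_inter.2 ⟨hw, (mem_fsupp hxr).2 hc⟩)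
        have h4 : 1 - ∑ w ∈ s₀, (x : W → ℝ) w ≤ n * δ := tail_bound hxr hx₀r hx
        have h5 := Mout_nonneg (x₀ : W → ℝ) t
        nlinarith
  rw [Real.dist_eq, abs_lt]
  constructor <;> nlinarith

lemma cont_inf' (A : Set (Finset W)) (t : Finset W) :
    ∀ ht : t.Nonempty, Continuous (fun x : ↥(realization A) => t.inf' ht (fun v => (x : W → ℝ) v)) := by
  induction t using Finset.induction with
  | empty => intro h; simp at h
  | @insert a s ha ih =>
    intro h
    by_cases hs : s.Nonempty
    · have heq : (fun x : ↥(realization A) => (insert a s).inf' h (fun v => (x : W → ℝ) v))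
          = fun x : ↥(realization A) =>
            min ((x : W → ℝ) a) (s.inf' hs (fun v => (x : W → ℝ) v)) := by
        funext x
        rw [Finset.inf'_insert hs]
      rw [heq]
      exact Continuous.min ((continuous_apply a).comp continuous_subtype_val) (ih hs)
    · rw [Finset.not_nonempty_iff_eq_empty] at hs
      subst hs
      have heq : ∀ x : ↥(realization A), ((insert a ∅ : Finset W)).inf' h (fun v => (x : W → ℝ) v)
          = (x : W → ℝ) a := by
        intro x
        simp
      rw [show (fun x : ↥(realization A) => ((insert a ∅ : Finset W)).inf' h (fun v => (x : W → ℝ) v))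
        = fun x : ↥(realization A) => (x : W → ℝ) a from funext heq]
      exact (continuous_apply a).comp continuous_subtype_val

lemma cont_umap_coord (A : Set (Finset W)) (t : Finset W) :
    Continuous (fun x : ↥(realization A) => umap (x : W → ℝ) t) := by
  by_cases ht : t.Nonempty
  · simp only [umap, dif_pos ht]
    apply Continuous.mul continuous_const
    apply Continuous.max continuous_const
    exact Continuous.sub (cont_inf' A t ht) (cont_Mout A t)
  · simp only [umap, dif_neg ht]
    exact continuous_const

/-- the subdivision map, as a continuous map of realizations -/
def Ucm (hA : IsComplex A) : C(↥(realization A), ↥(realization (sdC A))) where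
  toFun := fun x => ⟨umap (x : W → ℝ), umap_mem hA x.2⟩
  continuous_toFun := by
    apply Continuous.subtype_mk
    apply continuous_pi
    intro t
    exact cont_umap_coord A t

lemma bmap_eq_kappa (z : Finset W → ℝ) (v : W) :
    bmap z v = ∑ t ∈ fsupp z, (if v ∈ t then ((t.card : ℝ))⁻¹ else 0) * z t := by
  rw [bmap, Finset.sum_filter]
  apply Finset.sum_congr rfl
  intro t _
  by_cases hv : v ∈ t
  · rw [if_pos hv, if_pos hv, div_eq_mul_inv, mul_comm]
  · rw [if_neg hv, if_neg hv, zero_mul]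

/-- the barycentric reconstruction, as a continuous map of realizations -/
def Bcm (hA : IsComplex A) : C(↥(realization (sdC A)), ↥(realization A)) where
  toFun := fun z => ⟨bmap (z : Finset W → ℝ), bmap_mem hA z.2⟩
  continuous_toFun := by
    apply Continuous.subtype_mk
    apply continuous_pi
    intro v
    have : (fun z : ↥(realization (sdC A)) => bmap (z : Finset W → ℝ) v)
        = fun z : ↥(realization (sdC A)) => ∑ t ∈ fsupp (z : Finset W → ℝ),
            (if v ∈ t then ((t.card : ℝ))⁻¹ else 0) * (z : Finset W → ℝ) t := by
      funext z
      exact bmap_eq_kappa _ v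
    rw [this]
    apply cont_kappa (sdC A)
    · intro t
      split <;> positivity
    · intro t
      split
      · rcases Nat.eq_zero_or_pos t.card with h | h
        · rw [h]; norm_num
        · rw [inv_le_one_iff₀]
          right
          exact_mod_cast h
      · norm_num

lemma push_eq_kappa (φ : W → W') (x : W → ℝ) (w' : W') :
    push φ x w' = ∑ v ∈ fsupp x, (if φ v = w' then 1 else 0) * x v := by
  rw [push, Finset.sum_filter]
  apply Finset.sum_congr rfl
  intro v _
  by_cases hv : φ v = w'
  · rw [if_pos hv, if_pos hv, one_mul]
  · rw [if_neg hv, if_neg hv, zero_mul]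

/-- pushforward along a simplicial vertex map, as a continuous map of realizations -/
def Pcm (hA : IsComplex A) (φ : W → W')
    (himg : ∀ s ∈ A, ∃ s' ∈ A', ∀ a ∈ s, φ a ∈ s') :
    C(↥(realization A), ↥(realization A')) where
  toFun := fun x => ⟨push φ (x : W → ℝ), push_mem hA himg x.2⟩
  continuous_toFun := by
    apply Continuous.subtype_mk
    apply continuous_pi
    intro w'
    have : (fun x : ↥(realization A) => push φ (x : W → ℝ) w')
        = fun x : ↥(realization A) => ∑ v ∈ fsupp (x : W → ℝ),
            (if φ v = w' then 1 else 0) * (x : W → ℝ) v := by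
      funext x
      exact push_eq_kappa φ _ w'
    rw [this]
    apply cont_kappa A
    · intro v; split <;> norm_num
    · intro v; split <;> norm_num

end Cont2

section Homotopy

open Finset unitInterval

variable {A : Set (Finset W)} {Y : Type*} [TopologicalSpace Y]

/-- two maps into a realization which always land in a common simplex
are homotopic via the straight-line homotopy -/
lemma homotopic_of_common_simplex (h₀ h₁ : C(Y, ↥(realization A)))
    (hc : ∀ y : Y, ∃ s ∈ A, (∀ v, ((h₀ y : W → ℝ)) v ≠ 0 → v ∈ s) ∧
      (∀ v, ((h₁ y : W → ℝ)) v ≠ 0 → v ∈ s)) :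
    h₀.Homotopic h₁ := by
  refine ⟨?_⟩
  refine ContinuousMap.Homotopy.mk
    ⟨fun p => ⟨fun v => (1 - (p.1 : ℝ)) * ((h₀ p.2 : W → ℝ)) v + (p.1 : ℝ) * ((h₁ p.2 : W → ℝ)) v,
      ?_⟩, ?_⟩ ?_ ?_
  · -- membership in the realization
    rcases p with ⟨t, y⟩
    obtain ⟨s, hsA, hs0, hs1⟩ := hc y
    have ht0 : (0:ℝ) ≤ (t : ℝ) := t.2.1
    have ht1 : (t : ℝ) ≤ 1 := t.2.2
    refine ⟨?_, s, hsA, ?_, ?_⟩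
    · intro v
      have := (h₀ y).2.1 v
      have := (h₁ y).2.1 v
      have h2 : (0:ℝ) ≤ 1 - (t : ℝ) := by linarith
      positivity
    · intro v hv
      by_cases h0 : ((h₀ y : W → ℝ)) v = 0
      · by_cases h1 : ((h₁ y : W → ℝ)) v = 0
        · exfalso
          apply hv
          show (1 - (t : ℝ)) * ((h₀ y : W → ℝ)) v + (t : ℝ) * ((h₁ y : W → ℝ)) v = 0
          rw [h0, h1]
          ring
        · exact hs1 v h1
      · exact hs0 v h0
    · have e0 : ∑ v ∈ s, ((h₀ y : W → ℝ)) v = 1 :=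
        sum_fsupp_of_superset (h₀ y).2 (fsupp_subset_witness (h₀ y).2 hs0)
      have e1 : ∑ v ∈ s, ((h₁ y : W → ℝ)) v = 1 :=
        sum_fsupp_of_superset (h₁ y).2 (fsupp_subset_witness (h₁ y).2 hs1)
      rw [Finset.sum_add_distrib, ← Finset.mul_sum, ← Finset.mul_sum, e0, e1]
      ring
  · -- continuity
    apply Continuous.subtype_mk
    apply continuous_pi
    intro v
    have c0 : Continuous (fun p : I × Y => ((h₀ p.2 : W → ℝ)) v) :=
      (continuous_apply v).comp (continuous_subtype_val.comp (h₀.continuous.comp continuous_snd))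
    have c1 : Continuous (fun p : I × Y => ((h₁ p.2 : W → ℝ)) v) :=
      (continuous_apply v).comp (continuous_subtype_val.comp (h₁.continuous.comp continuous_snd))
    have ct : Continuous (fun p : I × Y => (p.1 : ℝ)) :=
      continuous_subtype_val.comp continuous_fst
    exact ((continuous_const.sub ct).mul c0).add (ct.mul c1)
  · intro y
    apply Subtype.ext
    funext v
    simp
  · intro y
    apply Subtype.ext
    funext v
    simp

end Homotopy

section MainDefs

open Finset

variable {γ : Type*}

/-- minimal element of a finite chain of finsets -/
def minn (T : Finset (Finset γ)) : Finset γ :=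
  if h : T.Nonempty then T.inf' h id else ∅

lemma minn_spec {T : Finset (Finset γ)} (hch : ∀ a ∈ T, ∀ b ∈ T, a ⊆ b ∨ b ⊆ a)
    (hT : T.Nonempty) : minn T ∈ T ∧ ∀ t ∈ T, minn T ⊆ t := by
  obtain ⟨m, hm, hmin⟩ := chain_exists_min T hch hT
  have heq : minn T = m := by
    rw [minn, dif_pos hT]
    apply le_antisymm
    · exact Finset.inf'_le id hm
    · exact Finset.le_inf' hT id (fun t ht => hmin t ht)
  rw [heq]
  exact ⟨hm, hmin⟩

lemma minn_anti {T T' : Finset (Finset γ)} (hch' : ∀ a ∈ T', ∀ b ∈ T', a ⊆ b ∨ b ⊆ a)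
    (hT : T.Nonempty) (hsub : T ⊆ T') : minn T' ⊆ minn T := by
  have hch : ∀ a ∈ T, ∀ b ∈ T, a ⊆ b ∨ b ⊆ a := fun a ha b hb => hch' a (hsub ha) b (hsub hb)
  obtain ⟨hmem, hmin⟩ := minn_spec hch hT
  exact (minn_spec hch' ⟨_, hsub hmem⟩).2 (minn T) (hsub hmem)

end MainDefs

section Main

open Finset

variable {V : Type*} (X : Set (Finset V))

/-- the chosen maximal simplex containing a given simplex -/
def cf (hcover : ∀ s ∈ X, ∃ K, IsMaxSimplex X K ∧ s ⊆ K) : Finset V → Finset V :=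
  fun s => if h : s ∈ X then (hcover s h).choose else ∅

lemma cf_spec (hcover : ∀ s ∈ X, ∃ K, IsMaxSimplex X K ∧ s ⊆ K) {s : Finset V} (hs : s ∈ X) :
    IsMaxSimplex X (cf X hcover s) ∧ s ⊆ cf X hcover s := by
  rw [cf, dif_pos hs]
  exact (hcover s hs).choose_spec

/-- the chosen maximal simplex as a vertex of the nerve -/
def Fv (hcover : ∀ s ∈ X, ∃ K, IsMaxSimplex X K ∧ s ⊆ K)
    (K₀ : {K : Finset V // IsMaxSimplex X K}) :
    Finset V → {K : Finset V // IsMaxSimplex X K} :=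
  fun s => if h : s ∈ X then ⟨cf X hcover s, (cf_spec X hcover h).1⟩ else K₀

lemma Fv_val (hcover : ∀ s ∈ X, ∃ K, IsMaxSimplex X K ∧ s ⊆ K)
    (K₀ : {K : Finset V // IsMaxSimplex X K}) {s : Finset V} (hs : s ∈ X) :
    (Fv X hcover K₀ s).1 = cf X hcover s := by
  rw [Fv, dif_pos hs]

/-- a chosen common vertex of a family of maximal simplices -/
def dd (v₀ : V) : Finset {K : Finset V // IsMaxSimplex X K} → V :=
  fun τ => if h : ∃ y : V, ∀ K ∈ τ, y ∈ K.1 then h.choose else v₀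

lemma dd_spec (v₀ : V) {τ : Finset {K : Finset V // IsMaxSimplex X K}}
    (h : ∃ y : V, ∀ K ∈ τ, y ∈ K.1) : ∀ K ∈ τ, dd X v₀ τ ∈ K.1 := by
  rw [dd, dif_pos h]
  exact h.choose_spec

/-- a chosen element of a nonempty family of maximal simplices -/
def kk (K₀ : {K : Finset V // IsMaxSimplex X K}) :
    Finset {K : Finset V // IsMaxSimplex X K} → {K : Finset V // IsMaxSimplex X K} :=
  fun τ => if h : τ.Nonempty then h.choose else K₀

lemma kk_spec (K₀ : {K : Finset V // IsMaxSimplex X K})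
    {τ : Finset {K : Finset V // IsMaxSimplex X K}} (h : τ.Nonempty) : kk X K₀ τ ∈ τ := by
  rw [kk, dif_pos h]
  exact h.choose_spec

lemma isComplex_nerve : IsComplex (nerveComplex X) := by
  constructor
  · intro σ hσ; exact hσ.1
  · intro σ hσ τ hsub hne
    obtain ⟨y, hy⟩ := hσ.2
    exact ⟨hne, y, fun K hK => hy K (hsub hK)⟩

lemma hcap_simplex (hcap : ∀ σ : Finset (Finset V), (∀ K ∈ σ, IsMaxSimplex X K) → σ.Nonempty →
      (∀ x : V, ¬ (∀ K ∈ σ, x ∈ K)) ∨ ∃ t ∈ X, ∀ x : V, x ∈ t ↔ ∀ K ∈ σ, x ∈ K)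
    {σ : Finset (Finset V)} (hmax : ∀ K ∈ σ, IsMaxSimplex X K) (hne : σ.Nonempty)
    {y : V} (hy : ∀ K ∈ σ, y ∈ K) :
    ∃ t ∈ X, ∀ z : V, z ∈ t ↔ ∀ K ∈ σ, z ∈ K := by
  rcases hcap σ hmax hne with h | h
  · exact absurd hy (h y)
  · exact h

/-- every chain of simplices has a common vertex (in the minimal simplex) -/
lemma chain_common (hX : IsComplex X) {C : Finset (Finset V)} (hC : C ∈ sdC X) :
    ∃ y : V, ∀ s ∈ C, y ∈ s := by
  obtain ⟨hmem, hmin⟩ := minn_spec hC.2.2 hC.1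
  obtain ⟨y, hy⟩ := hX.1 _ (hC.2.1 _ hmem)
  exact ⟨y, fun s hs => hmin s hs hy⟩

/-- image of a chain of simplices under `Fv` is a nerve simplex -/
lemma himgF1 (hX : IsComplex X) (hcover : ∀ s ∈ X, ∃ K, IsMaxSimplex X K ∧ s ⊆ K)
    (K₀ : {K : Finset V // IsMaxSimplex X K}) :
    ∀ C ∈ sdC X, C.image (Fv X hcover K₀) ∈ nerveComplex X := by
  intro C hC
  obtain ⟨y, hy⟩ := chain_common X hX hC
  refine ⟨hC.1.image _, y, ?_⟩
  intro K hK
  obtain ⟨s, hs, rfl⟩ := Finset.mem_image.1 hK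
  have hsX : s ∈ X := hC.2.1 s hs
  rw [Fv_val X hcover K₀ hsX]
  exact (cf_spec X hcover hsX).2 (hy s hs)

/-- the common vertex of a nerve simplex belongs to all its maximal simplices -/
lemma dd_mem (v₀ : V) {σ : Finset {K : Finset V // IsMaxSimplex X K}}
    (hσ : σ ∈ nerveComplex X) : ∀ K ∈ σ, dd X v₀ σ ∈ K.1 :=
  dd_spec X v₀ hσ.2

/-- the image of a chain of nerve simplices under `dd` is a simplex of `X` -/
lemma himgG1 (hX : IsComplex X)
    (hcap : ∀ σ : Finset (Finset V), (∀ K ∈ σ, IsMaxSimplex X K) → σ.Nonempty →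
      (∀ x : V, ¬ (∀ K ∈ σ, x ∈ K)) ∨ ∃ t ∈ X, ∀ x : V, x ∈ t ↔ ∀ K ∈ σ, x ∈ K)
    (v₀ : V) {Sg : Finset (Finset {K : Finset V // IsMaxSimplex X K})}
    (hSg : Sg ∈ sdC (nerveComplex X)) : Sg.image (dd X v₀) ∈ X := by
  obtain ⟨hmem, hmin⟩ := minn_spec hSg.2.2 hSg.1
  set σm := minn Sg with hσm
  have hσmB : σm ∈ nerveComplex X := hSg.2.1 _ hmem
  obtain ⟨y, hy⟩ := hσmB.2
  have hmax : ∀ K ∈ σm.image Subtype.val, IsMaxSimplex X K := by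
    intro K hK
    obtain ⟨K', hK', rfl⟩ := Finset.mem_image.1 hK
    exact K'.2
  have hyim : ∀ K ∈ σm.image Subtype.val, y ∈ K := by
    intro K hK
    obtain ⟨K', hK', rfl⟩ := Finset.mem_image.1 hK
    exact hy K' hK'
  obtain ⟨t, htX, ht⟩ := hcap_simplex X hcap hmax (hσmB.1.image _) hyim
  have hsub : Sg.image (dd X v₀) ⊆ t := by
    intro v hv
    obtain ⟨sg, hsg', rfl⟩ := Finset.mem_image.1 hv
    rw [ht]
    intro K hK
    obtain ⟨K', hK', rfl⟩ := Finset.mem_image.1 hK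
    exact dd_mem X v₀ (hSg.2.1 _ hsg') K' (hmin _ hsg' hK')
  exact hX.2 t htX _ hsub (hSg.1.image _)

end Main

section Main2

open Finset

variable {V : Type*} (X : Set (Finset V))

lemma himgF3 (hX : IsComplex X) (hcover : ∀ s ∈ X, ∃ K, IsMaxSimplex X K ∧ s ⊆ K)
    (K₀ : {K : Finset V // IsMaxSimplex X K}) :
    ∀ S ∈ sdC (sdC (sdC X)),
      S.image (fun D => D.image (fun C => C.image (Fv X hcover K₀)))
        ∈ sdC (sdC (nerveComplex X)) := by
  intro S hS
  refine ⟨hS.1.image _, ?_, ?_⟩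
  · intro B hB
    obtain ⟨D, hD, rfl⟩ := Finset.mem_image.1 hB
    have hDm : D ∈ sdC (sdC X) := hS.2.1 D hD
    refine ⟨hDm.1.image _, ?_, ?_⟩
    · intro τ hτ
      obtain ⟨C, hC, rfl⟩ := Finset.mem_image.1 hτ
      exact himgF1 X hX hcover K₀ C (hDm.2.1 C hC)
    · intro τ hτ τ' hτ'
      obtain ⟨C, hC, rfl⟩ := Finset.mem_image.1 hτ
      obtain ⟨C', hC', rfl⟩ := Finset.mem_image.1 hτ'
      rcases hDm.2.2 C hC C' hC' with h | h
      · exact Or.inl (Finset.image_subset_image h)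
      · exact Or.inr (Finset.image_subset_image h)
  · intro B hB B' hB'
    obtain ⟨D, hD, rfl⟩ := Finset.mem_image.1 hB
    obtain ⟨D', hD', rfl⟩ := Finset.mem_image.1 hB'
    rcases hS.2.2 D hD D' hD' with h | h
    · exact Or.inl (Finset.image_subset_image h)
    · exact Or.inr (Finset.image_subset_image h)

lemma himgG (hX : IsComplex X)
    (hcap : ∀ σ : Finset (Finset V), (∀ K ∈ σ, IsMaxSimplex X K) → σ.Nonempty →
      (∀ x : V, ¬ (∀ K ∈ σ, x ∈ K)) ∨ ∃ t ∈ X, ∀ x : V, x ∈ t ↔ ∀ K ∈ σ, x ∈ K)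
    (v₀ : V) :
    ∀ T ∈ sdC (sdC (nerveComplex X)), T.image (fun Sg => Sg.image (dd X v₀)) ∈ sdC X := by
  intro T hT
  refine ⟨hT.1.image _, ?_, ?_⟩
  · intro t ht
    obtain ⟨Sg, hSg, rfl⟩ := Finset.mem_image.1 ht
    exact himgG1 X hX hcap v₀ (hT.2.1 Sg hSg)
  · intro t ht t' ht'
    obtain ⟨Sg, hSg, rfl⟩ := Finset.mem_image.1 ht
    obtain ⟨Sg', hSg', rfl⟩ := Finset.mem_image.1 ht'
    rcases hT.2.2 Sg hSg Sg' hSg' with h | h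
    · exact Or.inl (Finset.image_subset_image h)
    · exact Or.inr (Finset.image_subset_image h)

lemma himgLam (hX : IsComplex X) :
    ∀ S ∈ sdC (sdC (sdC X)), S.image (fun D => minn (minn D)) ∈ sdC X := by
  intro S hS
  have key : ∀ D ∈ S, ∀ D' ∈ S, D ⊆ D' → minn (minn D) ⊆ minn (minn D') := by
    intro D hD D' hD' hsub
    have hDm : D ∈ sdC (sdC X) := hS.2.1 D hD
    have hD'm : D' ∈ sdC (sdC X) := hS.2.1 D' hD'
    have h1 : minn D' ⊆ minn D := minn_anti hD'm.2.2 hDm.1 hsub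
    have hC' : minn D' ∈ D' := (minn_spec hD'm.2.2 hD'm.1).1
    have hC'm : minn D' ∈ sdC X := hD'm.2.1 _ hC'
    have hC : minn D ∈ D := (minn_spec hDm.2.2 hDm.1).1
    have hCm : minn D ∈ sdC X := hDm.2.1 _ hC
    exact minn_anti hCm.2.2 hC'm.1 h1
  refine ⟨hS.1.image _, ?_, ?_⟩
  · intro t ht
    obtain ⟨D, hD, rfl⟩ := Finset.mem_image.1 ht
    have hDm : D ∈ sdC (sdC X) := hS.2.1 D hD
    have hC : minn D ∈ D := (minn_spec hDm.2.2 hDm.1).1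
    have hCm : minn D ∈ sdC X := hDm.2.1 _ hC
    exact hCm.2.1 _ (minn_spec hCm.2.2 hCm.1).1
  · intro t ht t' ht'
    obtain ⟨D, hD, rfl⟩ := Finset.mem_image.1 ht
    obtain ⟨D', hD', rfl⟩ := Finset.mem_image.1 ht'
    rcases hS.2.2 D hD D' hD' with h | h
    · exact Or.inl (key D hD D' hD' h)
    · exact Or.inr (key D' hD' D hD h)

lemma himgM (hX : IsComplex X) (v₀ : V) (K₀ : {K : Finset V // IsMaxSimplex X K}) :
    ∀ T ∈ sdC (sdC (nerveComplex X)),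
      T.image (fun Sg => kk X K₀ (minn Sg)) ∈ nerveComplex X := by
  intro T hT
  have hTne := hT.1
  have hSgm : minn T ∈ T := (minn_spec hT.2.2 hTne).1
  have hSgmm : minn T ∈ sdC (nerveComplex X) := hT.2.1 _ hSgm
  have hσm : minn (minn T) ∈ minn T := (minn_spec hSgmm.2.2 hSgmm.1).1
  have hσmB : minn (minn T) ∈ nerveComplex X := hSgmm.2.1 _ hσm
  set p := dd X v₀ (minn (minn T)) with hp
  refine ⟨hTne.image _, p, ?_⟩
  intro K hK
  obtain ⟨Sg, hSg, rfl⟩ := Finset.mem_image.1 hK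
  have hSgm2 : Sg ∈ sdC (nerveComplex X) := hT.2.1 Sg hSg
  have hsub : minn T ⊆ Sg := (minn_spec hT.2.2 hTne).2 Sg hSg
  have h1 : minn Sg ⊆ minn (minn T) := minn_anti hSgm2.2.2 hSgmm.1 hsub
  have hminSgne : (minn Sg).Nonempty := by
    have := (minn_spec hSgm2.2.2 hSgm2.1).1
    exact (hSgm2.2.1 _ this).1
  have h2 : kk X K₀ (minn Sg) ∈ minn (minn T) := h1 (kk_spec X K₀ hminSgne)
  exact dd_mem X v₀ hσmB _ h2

end Main2

section MainAux

open Finset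

variable {W : Type*} {A : Set (Finset W)}

lemma usupp_subset (hA : IsComplex A) {x : W → ℝ} (hx : x ∈ realization A)
    {t : Finset W} (ht : t ∈ fsupp (umap x)) : t ⊆ fsupp x :=
  levels_subset hx (by rwa [umap_supp hA hx] at ht)

lemma usupp_elt_nonempty (hA : IsComplex A) {x : W → ℝ} (hx : x ∈ realization A)
    {t : Finset W} (ht : t ∈ fsupp (umap x)) : t.Nonempty :=
  levels_nonempty_elt hx (by rwa [umap_supp hA hx] at ht)

end MainAux

end
end Stmt19

section FinalProof
attribute [local instance] Classical.propDecidable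
open Stmt19

/-- Nerve theorem for the cover by maximal simplices: if every simplex of `X` lies in a
maximal simplex and every finite intersection of maximal simplices is empty or a simplex
of `X` (hence contractible), then the geometric realization of `X` is homotopy equivalent
to the geometric realization of the nerve `N(X)` of the maximal simplices. -/
theorem stmt19 {V : Type*} (X : Set (Finset V)) (hX : IsComplex X)
    (hcover : ∀ s ∈ X, ∃ K, IsMaxSimplex X K ∧ s ⊆ K)
    (hcap : ∀ σ : Finset (Finset V), (∀ K ∈ σ, IsMaxSimplex X K) → σ.Nonempty →
      (∀ x : V, ¬ (∀ K ∈ σ, x ∈ K)) ∨ ∃ t ∈ X, ∀ x : V, x ∈ t ↔ ∀ K ∈ σ, x ∈ K) :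
    Nonempty (ContinuousMap.HomotopyEquiv (realization X) (realization (nerveComplex X))) := by
  classical
  by_cases hXne : ∃ s, s ∈ X
  · obtain ⟨s₀, hs₀⟩ := hXne
    obtain ⟨v₀, hv₀⟩ := hX.1 s₀ hs₀
    obtain ⟨Km, hKm, -⟩ := hcover s₀ hs₀
    set K₀ : {K : Finset V // IsMaxSimplex X K} := ⟨Km, hKm⟩ with hK₀
    have hB0 : IsComplex (nerveComplex X) := isComplex_nerve X
    have hA1 : IsComplex (sdC X) := isComplex_sdC _ hX
    have hA2 : IsComplex (sdC (sdC X)) := isComplex_sdC _ hA1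
    have hA3 : IsComplex (sdC (sdC (sdC X))) := isComplex_sdC _ hA2
    have hB1 : IsComplex (sdC (nerveComplex X)) := isComplex_sdC _ hB0
    have hB2 : IsComplex (sdC (sdC (nerveComplex X))) := isComplex_sdC _ hB1
    -- the continuous maps
    let UX0 := Ucm hX
    let UX1 := Ucm hA1
    let UX2 := Ucm hA2
    let PF2 := Pcm hA3 (fun D => D.image (fun C => C.image (Fv X hcover K₀)))
      (fun s hs => ⟨_, himgF3 X hX hcover K₀ s hs, fun a ha => Finset.mem_image_of_mem _ ha⟩)
    let BB1 := Bcm hB1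
    let BB0 := Bcm hB0
    let f : C(↥(realization X), ↥(realization (nerveComplex X))) :=
      BB0.comp (BB1.comp (PF2.comp (UX2.comp (UX1.comp UX0))))
    let UN0 := Ucm hB0
    let UN1 := Ucm hB1
    let PG := Pcm hB2 (fun Sg => Sg.image (dd X v₀))
      (fun s hs => ⟨_, himgG X hX hcap v₀ s hs, fun a ha => Finset.mem_image_of_mem _ ha⟩)
    let BX := Bcm hX
    let g : C(↥(realization (nerveComplex X)), ↥(realization X)) :=
      BX.comp (PG.comp (UN1.comp UN0))
    let PLam := Pcm hA3 (fun D => minn (minn D))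
      (fun s hs => ⟨_, himgLam X hX s hs, fun a ha => Finset.mem_image_of_mem _ ha⟩)
    let lam : C(↥(realization X), ↥(realization X)) :=
      BX.comp (PLam.comp (UX2.comp (UX1.comp UX0)))
    let PM := Pcm hB2 (fun Sg => kk X K₀ (minn Sg))
      (fun s hs => ⟨_, himgM X hX v₀ K₀ s hs, fun a ha => Finset.mem_image_of_mem _ ha⟩)
    let mu : C(↥(realization (nerveComplex X)), ↥(realization (nerveComplex X))) :=
      PM.comp (UN1.comp UN0)
    let PFv := Pcm hA1 (Fv X hcover K₀)
      (fun s hs => ⟨_, himgF1 X hX hcover K₀ s hs, fun a ha => Finset.mem_image_of_mem _ ha⟩)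
    let f₂ : C(↥(realization X), ↥(realization (nerveComplex X))) :=
      PFv.comp UX0
    -- pointwise descriptions of the composites
    have e_sd1 : ∀ ζ : ↥(realization (sdC (nerveComplex X))), UN0 (BB0 ζ) = ζ :=
      fun ζ => Subtype.ext (umap_bmap hB0 ζ.2)
    have e_sd2 : ∀ ζ : ↥(realization (sdC (sdC (nerveComplex X)))), UN1 (BB1 ζ) = ζ :=
      fun ζ => Subtype.ext (umap_bmap hB1 ζ.2)
    have e_sd0 : ∀ ζ : ↥(realization (sdC X)), UX0 (BX ζ) = ζ :=
      fun ζ => Subtype.ext (umap_bmap hX ζ.2)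
    have gf_eq : ∀ x, (g.comp f) x = BX (PG (PF2 (UX2 (UX1 (UX0 x))))) := by
      intro x
      show BX (PG (UN1 (UN0 (BB0 (BB1 (PF2 (UX2 (UX1 (UX0 x))))))))) = _
      rw [e_sd1, e_sd2]
    have f₂g_eq : ∀ φ, (f₂.comp g) φ = PFv (PG (UN1 (UN0 φ))) := by
      intro φ
      show PFv (UX0 (BX (PG (UN1 (UN0 φ))))) = _
      rw [e_sd0]
    -- homotopies
    have h1a : lam.Homotopic (ContinuousMap.id _) := by
      apply homotopic_of_common_simplex
      intro x
      refine ⟨fsupp (x : V → ℝ), fsupp_mem hX x.2, ?_, fun v hv => (mem_fsupp x.2).2 hv⟩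
      intro v hv
      have hx1 := (UX0 x).2
      have hx2 := (UX1 (UX0 x)).2
      have hx3 := (UX2 (UX1 (UX0 x))).2
      have hpz := (PLam (UX2 (UX1 (UX0 x)))).2
      have hv' : v ∈ fsupp (bmap (push (fun D => minn (minn D))
          ((UX2 (UX1 (UX0 x))) : Finset (Finset (Finset V)) → ℝ))) :=
        (mem_fsupp (bmap_mem hX hpz)).2 hv
      obtain ⟨t, htf, hvt⟩ := bmap_supp_subset hX hpz hv'
      obtain ⟨D, hD, hDt⟩ := push_ne_exists ((mem_fsupp hpz).1 htf)
      have hL2 : fsupp ((UX1 (UX0 x)) : Finset (Finset V) → ℝ) ∈ sdC (sdC X) :=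
        fsupp_mem_sdC hx2
      have hD2 : D ⊆ fsupp ((UX1 (UX0 x)) : Finset (Finset V) → ℝ) :=
        usupp_subset hA2 hx2 hD
      have hDne : D.Nonempty := usupp_elt_nonempty hA2 hx2 hD
      have hDch : ∀ a ∈ D, ∀ b ∈ D, a ⊆ b ∨ b ⊆ a :=
        fun a ha b hb => hL2.2.2 a (hD2 ha) b (hD2 hb)
      have hC0D : minn D ∈ D := (minn_spec hDch hDne).1
      have hC0m : minn D ∈ sdC X := hL2.2.1 _ (hD2 hC0D)
      have hmm : minn (minn D) ∈ minn D := (minn_spec hC0m.2.2 hC0m.1).1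
      have hC0sub : minn D ⊆ fsupp ((UX0 x) : Finset V → ℝ) :=
        usupp_subset hA1 hx1 (hD2 hC0D)
      have hfinal : minn (minn D) ⊆ fsupp (x : V → ℝ) :=
        usupp_subset hX x.2 (hC0sub hmm)
      rw [← hDt] at hvt
      exact hfinal hvt
    have h1b : (g.comp f).Homotopic lam := by
      apply homotopic_of_common_simplex
      intro x
      have hx1 := (UX0 x).2
      have hx2 := (UX1 (UX0 x)).2
      have hx3 := (UX2 (UX1 (UX0 x))).2
      have hL2 : fsupp ((UX1 (UX0 x)) : Finset (Finset V) → ℝ) ∈ sdC (sdC X) :=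
        fsupp_mem_sdC hx2
      have hL2ne : (fsupp ((UX1 (UX0 x)) : Finset (Finset V) → ℝ)).Nonempty :=
        fsupp_nonempty hx2
      obtain ⟨hC1mem, hC1min⟩ := minn_spec hL2.2.2 hL2ne
      have hC1sd : minn (fsupp ((UX1 (UX0 x)) : Finset (Finset V) → ℝ)) ∈ sdC X :=
        hL2.2.1 _ hC1mem
      set C1 := minn (fsupp ((UX1 (UX0 x)) : Finset (Finset V) → ℝ)) with hC1def
      obtain ⟨y, hy⟩ := chain_common X hX hC1sd
      have hmax : ∀ K ∈ C1.image (cf X hcover), IsMaxSimplex X K := by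
        intro K hK
        obtain ⟨s, hs, rfl⟩ := Finset.mem_image.1 hK
        exact (cf_spec X hcover (hC1sd.2.1 s hs)).1
      have hcommon : ∀ K ∈ C1.image (cf X hcover), y ∈ K := by
        intro K hK
        obtain ⟨s, hs, rfl⟩ := Finset.mem_image.1 hK
        exact (cf_spec X hcover (hC1sd.2.1 s hs)).2 (hy s hs)
      obtain ⟨tstar, htstarX, htstar⟩ :=
        hcap_simplex X hcap hmax (hC1sd.1.image _) hcommon
      refine ⟨tstar, htstarX, ?_, ?_⟩
      · -- support of g ∘ f
        intro v hv
        rw [gf_eq x] at hv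
        have hw := (PF2 (UX2 (UX1 (UX0 x)))).2
        have hPGw := (PG (PF2 (UX2 (UX1 (UX0 x))))).2
        have hv' : v ∈ fsupp (bmap (push (fun Sg => Sg.image (dd X v₀))
            ((PF2 (UX2 (UX1 (UX0 x)))) : Finset (Finset {K : Finset V // IsMaxSimplex X K}) → ℝ))) :=
          (mem_fsupp (bmap_mem hX hPGw)).2 hv
        obtain ⟨tv, htv, hvtv⟩ := bmap_supp_subset hX hPGw hv'
        obtain ⟨Sg, hSg, hSgt⟩ := push_ne_exists ((mem_fsupp hPGw).1 htv)
        obtain ⟨D, hD, hDSg⟩ := push_ne_exists ((mem_fsupp hw).1 hSg)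
        rw [← hSgt, ← hDSg] at hvtv
        obtain ⟨τ, hτ, hτv⟩ := Finset.mem_image.1 hvtv
        obtain ⟨C, hC, hCτ⟩ := Finset.mem_image.1 hτ
        have hD2 : D ⊆ fsupp ((UX1 (UX0 x)) : Finset (Finset V) → ℝ) :=
          usupp_subset hA2 hx2 hD
        have hCsd : C ∈ sdC X := hL2.2.1 _ (hD2 hC)
        have hC1C : C1 ⊆ C := hC1min _ (hD2 hC)
        have hτB : C.image (Fv X hcover K₀) ∈ nerveComplex X :=
          himgF1 X hX hcover K₀ C hCsd
        have hddτ := dd_mem X v₀ hτB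
        rw [(htstar v)]
        intro K hK
        obtain ⟨s, hs, rfl⟩ := Finset.mem_image.1 hK
        have hsX : s ∈ X := hCsd.2.1 s (hC1C hs)
        have hFs : Fv X hcover K₀ s ∈ C.image (Fv X hcover K₀) :=
          Finset.mem_image_of_mem _ (hC1C hs)
        have := hddτ _ hFs
        rw [Fv_val X hcover K₀ hsX] at this
        rw [← hτv, ← hCτ]
        exact this
      · -- support of lam
        intro v hv
        have hpz := (PLam (UX2 (UX1 (UX0 x)))).2
        have hv' : v ∈ fsupp (bmap (push (fun D => minn (minn D))
            ((UX2 (UX1 (UX0 x))) : Finset (Finset (Finset V)) → ℝ))) :=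
          (mem_fsupp (bmap_mem hX hpz)).2 hv
        obtain ⟨t, htf, hvt⟩ := bmap_supp_subset hX hpz hv'
        obtain ⟨D, hD, hDt⟩ := push_ne_exists ((mem_fsupp hpz).1 htf)
        have hD2 : D ⊆ fsupp ((UX1 (UX0 x)) : Finset (Finset V) → ℝ) :=
          usupp_subset hA2 hx2 hD
        have hDne : D.Nonempty := usupp_elt_nonempty hA2 hx2 hD
        have hDch : ∀ a ∈ D, ∀ b ∈ D, a ⊆ b ∨ b ⊆ a :=
          fun a ha b hb => hL2.2.2 a (hD2 ha) b (hD2 hb)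
        have hC0D : minn D ∈ D := (minn_spec hDch hDne).1
        have hC0m : minn D ∈ sdC X := hL2.2.1 _ (hD2 hC0D)
        have hC1C0 : C1 ⊆ minn D := hC1min _ (hD2 hC0D)
        rw [← hDt] at hvt
        rw [(htstar v)]
        intro K hK
        obtain ⟨s, hs, rfl⟩ := Finset.mem_image.1 hK
        have hsC0 : s ∈ minn D := hC1C0 hs
        have hsub : minn (minn D) ⊆ s := (minn_spec hC0m.2.2 hC0m.1).2 s hsC0
        exact (cf_spec X hcover (hC1sd.2.1 s hs)).2 (hsub hvt)
    have h2a : mu.Homotopic (ContinuousMap.id _) := by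
      apply homotopic_of_common_simplex
      intro φ
      refine ⟨fsupp (φ : {K : Finset V // IsMaxSimplex X K} → ℝ), fsupp_mem hB0 φ.2, ?_, fun K hK => (mem_fsupp φ.2).2 hK⟩
      intro K hK
      have hφ1 := (UN0 φ).2
      have hφ2 := (UN1 (UN0 φ)).2
      obtain ⟨Sg, hSg, hSgK⟩ := push_ne_exists (x := ((UN1 (UN0 φ)) : Finset (Finset {K : Finset V // IsMaxSimplex X K}) → ℝ)) hK
      have hN1 : fsupp ((UN0 φ) : Finset {K : Finset V // IsMaxSimplex X K} → ℝ) ∈ sdC (nerveComplex X) := fsupp_mem_sdC hφ1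
      have hSg2 : Sg ⊆ fsupp ((UN0 φ) : Finset {K : Finset V // IsMaxSimplex X K} → ℝ) := usupp_subset hB1 hφ1 hSg
      have hSgne : Sg.Nonempty := usupp_elt_nonempty hB1 hφ1 hSg
      have hSgch : ∀ a ∈ Sg, ∀ b ∈ Sg, a ⊆ b ∨ b ⊆ a :=
        fun a ha b hb => hN1.2.2 a (hSg2 ha) b (hSg2 hb)
      have hmS : minn Sg ∈ Sg := (minn_spec hSgch hSgne).1
      have hmSB : minn Sg ∈ nerveComplex X := hN1.2.1 _ (hSg2 hmS)
      have hkk : kk X K₀ (minn Sg) ∈ minn Sg := kk_spec X K₀ hmSB.1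
      have hmsub : minn Sg ⊆ fsupp (φ : {K : Finset V // IsMaxSimplex X K} → ℝ) := usupp_subset hB0 φ.2 (hSg2 hmS)
      rw [← hSgK]
      exact hmsub hkk
    have h2b : (f₂.comp g).Homotopic mu := by
      apply homotopic_of_common_simplex
      intro φ
      have hφ1 := (UN0 φ).2
      have hφ2 := (UN1 (UN0 φ)).2
      have hN2 : fsupp ((UN1 (UN0 φ)) : Finset (Finset {K : Finset V // IsMaxSimplex X K}) → ℝ) ∈ sdC (sdC (nerveComplex X)) :=
        fsupp_mem_sdC hφ2
      have hN2ne : (fsupp ((UN1 (UN0 φ)) : Finset (Finset {K : Finset V // IsMaxSimplex X K}) → ℝ)).Nonempty := fsupp_nonempty hφ2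
      obtain ⟨hSg1mem, hSg1min⟩ := minn_spec hN2.2.2 hN2ne
      have hSg1sd : minn (fsupp ((UN1 (UN0 φ)) : Finset (Finset {K : Finset V // IsMaxSimplex X K}) → ℝ)) ∈ sdC (nerveComplex X) :=
        hN2.2.1 _ hSg1mem
      set Sg1 := minn (fsupp ((UN1 (UN0 φ)) : Finset (Finset {K : Finset V // IsMaxSimplex X K}) → ℝ)) with hSg1def
      obtain ⟨hσ1mem, hσ1min⟩ := minn_spec hSg1sd.2.2 hSg1sd.1
      have hσ1B : minn Sg1 ∈ nerveComplex X := hSg1sd.2.1 _ hσ1mem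
      have hp := dd_mem X v₀ hσ1B
      set Θ := ((fsupp ((UN1 (UN0 φ)) : Finset (Finset {K : Finset V // IsMaxSimplex X K}) → ℝ)).image (fun Sg => kk X K₀ (minn Sg))) ∪
        ((fsupp ((UN1 (UN0 φ)) : Finset (Finset {K : Finset V // IsMaxSimplex X K}) → ℝ)).image
          (fun Sg => Fv X hcover K₀ (Sg.image (dd X v₀)))) with hΘdef
      have hΘ : Θ ∈ nerveComplex X := by
        refine ⟨?_, dd X v₀ (minn Sg1), ?_⟩
        · rw [hΘdef]
          apply Finset.Nonempty.inl
          exact hN2ne.image _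
        · intro K hK
          rw [hΘdef, Finset.mem_union] at hK
          rcases hK with hK | hK
          · obtain ⟨Sg, hSg, rfl⟩ := Finset.mem_image.1 hK
            have hSgsd : Sg ∈ sdC (nerveComplex X) := hN2.2.1 _ hSg
            have h1 : minn Sg ⊆ minn Sg1 := minn_anti hSgsd.2.2 hSg1sd.1 (hSg1min _ hSg)
            have hmSne : (minn Sg).Nonempty := by
              have hm : minn Sg ∈ Sg := (minn_spec hSgsd.2.2 hSgsd.1).1
              exact (hSgsd.2.1 _ hm).1
            exact hp _ (h1 (kk_spec X K₀ hmSne))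
          · obtain ⟨Sg, hSg, rfl⟩ := Finset.mem_image.1 hK
            have hSgsd : Sg ∈ sdC (nerveComplex X) := hN2.2.1 _ hSg
            have htSgX : Sg.image (dd X v₀) ∈ X := himgG1 X hX hcap v₀ hSgsd
            have hpmem : dd X v₀ (minn Sg1) ∈ Sg.image (dd X v₀) :=
              Finset.mem_image_of_mem _ (hSg1min _ hSg hσ1mem)
            rw [Fv_val X hcover K₀ htSgX]
            exact (cf_spec X hcover htSgX).2 hpmem
      refine ⟨Θ, hΘ, ?_, ?_⟩
      · -- support of f₂ ∘ g
        intro K hK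
        rw [f₂g_eq φ] at hK
        have hPGφ := (PG (UN1 (UN0 φ))).2
        obtain ⟨t, ht, htK⟩ := push_ne_exists
          (x := ((PG (UN1 (UN0 φ))) : Finset V → ℝ)) hK
        obtain ⟨Sg, hSg, hSgt⟩ := push_ne_exists ((mem_fsupp hPGφ).1 ht)
        rw [hΘdef, Finset.mem_union]
        right
        rw [← htK, ← hSgt]
        exact Finset.mem_image_of_mem _ hSg
      · -- support of mu
        intro K hK
        obtain ⟨Sg, hSg, hSgK⟩ := push_ne_exists (x := ((UN1 (UN0 φ)) : Finset (Finset {K : Finset V // IsMaxSimplex X K}) → ℝ)) hK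
        rw [hΘdef, Finset.mem_union]
        left
        rw [← hSgK]
        exact Finset.mem_image_of_mem _ hSg
    have h1 : (g.comp f).Homotopic (ContinuousMap.id _) := h1b.trans h1a
    have h2 : (f₂.comp g).Homotopic (ContinuousMap.id _) := h2b.trans h2a
    have hA' : (f₂.comp (g.comp f)).Homotopic (f₂.comp (ContinuousMap.id _)) :=
      ContinuousMap.Homotopic.comp (ContinuousMap.Homotopic.refl f₂) h1
    have hB' : ((f₂.comp g).comp f).Homotopic ((ContinuousMap.id _).comp f) :=
      ContinuousMap.Homotopic.comp h2 (ContinuousMap.Homotopic.refl f)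
    rw [ContinuousMap.comp_id] at hA'
    rw [ContinuousMap.id_comp, ContinuousMap.comp_assoc] at hB'
    have h3 : f.Homotopic f₂ := hB'.symm.trans hA'
    have hright : (f.comp g).Homotopic (ContinuousMap.id _) :=
      (ContinuousMap.Homotopic.comp h3 (ContinuousMap.Homotopic.refl g)).trans h2
    exact ⟨ContinuousMap.HomotopyEquiv.mk f g h1 hright⟩
  · push_neg at hXne
    have hE1 : IsEmpty ↥(realization X) := by
      refine ⟨fun x => ?_⟩
      obtain ⟨-, s, hs, -⟩ := x.2
      exact hXne s hs
    have hE2 : IsEmpty ↥(realization (nerveComplex X)) := by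
      refine ⟨fun φ => ?_⟩
      obtain ⟨-, σ, hσ, -⟩ := φ.2
      obtain ⟨K, -⟩ := hσ.1
      exact hXne K.1 K.2.1
    have cemp : ∀ {Z Z' : Type _} [TopologicalSpace Z] [TopologicalSpace Z'] [IsEmpty Z]
        (fn : Z → Z'), Continuous fn := by
      intro Z Z' _ _ _ fn
      rw [continuous_iff_continuousAt]
      intro z
      exact isEmptyElim z
    refine ⟨ContinuousMap.HomotopyEquiv.mk ⟨fun x => isEmptyElim x, cemp _⟩
      ⟨fun φ => isEmptyElim φ, cemp _⟩ ?_ ?_⟩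
    · exact ⟨⟨⟨fun p => isEmptyElim p.2, cemp _⟩, fun x => isEmptyElim x,
        fun x => isEmptyElim x⟩⟩
    · exact ⟨⟨⟨fun p => isEmptyElim p.2, cemp _⟩, fun x => isEmptyElim x,
        fun x => isEmptyElim x⟩⟩

end FinalProof
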